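/- arXiv:0906.5468 — 6 statements merged into one kernel-verified Lean document; each statement's English description precedes it below -/
import Mathlib

section
/- Let A be a ℂ-vector space, let i ≥ 2, and let m₀, m₁, …, m_{i−1} : A × A → A be ℂ-bilinear maps such that m₀ is associative and for every n with 1 ≤ n ≤ i−1 the order-n associativity condition holds: ∑_{j=0}^{n} [ m_j(m_{n−j}(a,b), c) − m_j(a, m_{n−j}(b,c)) ] = 0 for all a, b, c ∈ A. Define the ℂ-trilinear map ω_i(a,b,c) := −∑_{j=1}^{i−1} [ m_{i−j}(a, m_j(b,c)) − m_{i−j}(m_j(a,b), c) ]. Then ω_i is a Hochschild 3-cocycle with respect to m₀: for all a, b, c, e ∈ A, m₀(a, ω_i(b,c,e)) − ω_i(m₀(a,b), c, e) + ω_i(a, m₀(b,c), e) − ω_i(a, b, m₀(c,e)) + m₀(ω_i(a,b,c), e) = 0. -/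
open Finset

section ObstructionHelpers

variable {M : Type*} [AddCommGroup M]

private lemma mySum_Icc_reflect (i : ℕ) (F : ℕ → M) :
    ∑ j ∈ Icc 1 (i - 1), F j = ∑ j ∈ Icc 1 (i - 1), F (i - j) := by
  refine Finset.sum_nbij' (fun j => i - j) (fun j => i - j) ?_ ?_ ?_ ?_ ?_ <;>
    intro a ha <;> simp only [mem_Icc] at * <;> try omega
  have h : i - (i - a) = a := by omega
  rw [h]

private lemma myGridA (i : ℕ) (G : ℕ → ℕ → M) :
    ∑ z ∈ Icc 1 (i - 1), ∑ x ∈ range (i - z + 1), G x z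
    = ∑ z ∈ range (i + 1), ∑ x ∈ range (i + 1),
        (if 1 ≤ z ∧ z ≤ i - 1 ∧ x + z ≤ i then G x z else 0) := by
  calc ∑ z ∈ Icc 1 (i - 1), ∑ x ∈ range (i - z + 1), G x z
      = ∑ z ∈ Icc 1 (i - 1), ∑ x ∈ range (i + 1),
          (if 1 ≤ z ∧ z ≤ i - 1 ∧ x + z ≤ i then G x z else 0) := by
        refine Finset.sum_congr rfl fun z hz => ?_
        simp only [mem_Icc] at hz
        calc ∑ x ∈ range (i - z + 1), G x z
            = ∑ x ∈ range (i - z + 1),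
                (if 1 ≤ z ∧ z ≤ i - 1 ∧ x + z ≤ i then G x z else 0) := by
              refine Finset.sum_congr rfl fun x hx => ?_
              simp only [mem_range] at hx
              rw [if_pos]; omega
          _ = ∑ x ∈ range (i + 1),
                (if 1 ≤ z ∧ z ≤ i - 1 ∧ x + z ≤ i then G x z else 0) := by
              refine Finset.sum_subset (fun x hx => ?_) (fun x hx hx' => ?_)
              · simp only [mem_range] at *; omega
              · simp only [mem_range] at *; rw [if_neg]; omega
    _ = ∑ z ∈ range (i + 1), ∑ x ∈ range (i + 1),
          (if 1 ≤ z ∧ z ≤ i - 1 ∧ x + z ≤ i then G x z else 0) := by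
        refine Finset.sum_subset (fun z hz => ?_) (fun z hz hz' => ?_)
        · simp only [mem_Icc, mem_range] at *; omega
        · simp only [mem_Icc] at hz'
          exact Finset.sum_eq_zero fun x _ => by rw [if_neg]; omega

private lemma myGridB (i : ℕ) (G : ℕ → ℕ → M) :
    ∑ x ∈ Icc 1 (i - 1), ∑ z ∈ range (i - x + 1), G x z
    = ∑ z ∈ range (i + 1), ∑ x ∈ range (i + 1),
        (if 1 ≤ x ∧ x ≤ i - 1 ∧ x + z ≤ i then G x z else 0) := by
  rw [Finset.sum_comm]
  calc ∑ x ∈ Icc 1 (i - 1), ∑ z ∈ range (i - x + 1), G x z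
      = ∑ x ∈ Icc 1 (i - 1), ∑ z ∈ range (i + 1),
          (if 1 ≤ x ∧ x ≤ i - 1 ∧ x + z ≤ i then G x z else 0) := by
        refine Finset.sum_congr rfl fun x hx => ?_
        simp only [mem_Icc] at hx
        calc ∑ z ∈ range (i - x + 1), G x z
            = ∑ z ∈ range (i - x + 1),
                (if 1 ≤ x ∧ x ≤ i - 1 ∧ x + z ≤ i then G x z else 0) := by
              refine Finset.sum_congr rfl fun z hz => ?_
              simp only [mem_range] at hz
              rw [if_pos]; omega
          _ = _ := by
              refine Finset.sum_subset (fun z hz => ?_) (fun z hz hz' => ?_)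
              · simp only [mem_range] at *; omega
              · simp only [mem_range] at *; rw [if_neg]; omega
    _ = _ := by
        refine Finset.sum_subset (fun x hx => ?_) (fun x hx hx' => ?_)
        · simp only [mem_Icc, mem_range] at *; omega
        · simp only [mem_Icc] at hx'
          exact Finset.sum_eq_zero fun z _ => by rw [if_neg]; omega

private lemma myGridC (i : ℕ) (G : ℕ → ℕ → M) :
    ∑ s ∈ Icc 1 (i - 1), ∑ x ∈ range (s + 1), G x (s - x)
    = ∑ z ∈ range (i + 1), ∑ x ∈ range (i + 1),
        (if 1 ≤ x + z ∧ x + z ≤ i - 1 then G x z else 0) := by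
  have step1 : ∀ z x : ℕ, (if 1 ≤ x + z ∧ x + z ≤ i - 1 then G x z else 0)
      = ∑ s ∈ Icc 1 (i - 1), (if x + z = s then G x z else 0) := by
    intro z x
    rw [Finset.sum_ite_eq (Icc 1 (i-1)) (x + z) (fun _ => G x z)]
    simp only [mem_Icc]
  calc ∑ s ∈ Icc 1 (i - 1), ∑ x ∈ range (s + 1), G x (s - x)
      = ∑ s ∈ Icc 1 (i - 1), ∑ z ∈ range (i + 1), ∑ x ∈ range (i + 1),
          (if x + z = s then G x z else 0) := by
        refine Finset.sum_congr rfl fun s hs => ?_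
        simp only [mem_Icc] at hs
        calc ∑ x ∈ range (s + 1), G x (s - x)
            = ∑ z ∈ range (s + 1), G (s - z) z := by
              have := Finset.sum_range_reflect (fun z => G (s - z) z) (s + 1)
              rw [← this]
              refine Finset.sum_congr rfl fun x hx => ?_
              simp only [mem_range] at hx
              have h1 : s + 1 - 1 - x = s - x := by omega
              have h2 : s - (s - x) = x := by omega
              rw [h1, h2]
          _ = ∑ z ∈ range (i + 1), (if z ≤ s then G (s - z) z else 0) := by
              calc ∑ z ∈ range (s + 1), G (s - z) z
                  = ∑ z ∈ range (s + 1), (if z ≤ s then G (s - z) z else 0) := by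
                    refine Finset.sum_congr rfl fun z hz => ?_
                    simp only [mem_range] at hz
                    rw [if_pos (by omega)]
                _ = _ := by
                    refine Finset.sum_subset (fun z hz => ?_) (fun z hz hz' => ?_)
                    · simp only [mem_range] at *; omega
                    · simp only [mem_range] at *; rw [if_neg]; omega
          _ = ∑ z ∈ range (i + 1), ∑ x ∈ range (i + 1),
                (if x + z = s then G x z else 0) := by
              refine Finset.sum_congr rfl fun z hz => ?_
              simp only [mem_range] at hz
              by_cases hzs : z ≤ s
              · rw [if_pos hzs]
                calc G (s - z) z
                    = if s - z ∈ range (i + 1) then G (s - z) z else 0 := by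
                      rw [if_pos (by simp only [mem_range]; omega)]
                  _ = ∑ x ∈ range (i + 1), (if x = s - z then G x z else 0) := by
                      rw [Finset.sum_ite_eq' (range (i + 1)) (s - z) (fun x => G x z)]
                  _ = ∑ x ∈ range (i + 1), (if x + z = s then G x z else 0) := by
                      refine Finset.sum_congr rfl fun x hx => ?_
                      simp only [mem_range] at hx
                      by_cases h : x + z = s
                      · rw [if_pos h, if_pos (by omega)]
                      · rw [if_neg h, if_neg (by omega)]
              · rw [if_neg hzs]
                exact (Finset.sum_eq_zero fun x _ => by rw [if_neg]; omega).symm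
    _ = ∑ z ∈ range (i + 1), ∑ s ∈ Icc 1 (i - 1), ∑ x ∈ range (i + 1),
          (if x + z = s then G x z else 0) := Finset.sum_comm
    _ = ∑ z ∈ range (i + 1), ∑ x ∈ range (i + 1),
        (if 1 ≤ x + z ∧ x + z ≤ i - 1 then G x z else 0) := by
        refine Finset.sum_congr rfl fun z hz => ?_
        rw [Finset.sum_comm]
        exact Finset.sum_congr rfl fun x hx => (step1 z x).symm

private lemma myEdgeX0 (i : ℕ) (G : ℕ → ℕ → M) :
    ∑ z ∈ range (i + 1), ∑ x ∈ range (i + 1),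
        (if x = 0 ∧ 1 ≤ z ∧ z ≤ i - 1 then G x z else 0)
    = ∑ j ∈ Icc 1 (i - 1), G 0 j := by
  calc ∑ z ∈ range (i + 1), ∑ x ∈ range (i + 1),
        (if x = 0 ∧ 1 ≤ z ∧ z ≤ i - 1 then G x z else 0)
      = ∑ z ∈ range (i + 1), (if 1 ≤ z ∧ z ≤ i - 1 then G 0 z else 0) := by
        refine Finset.sum_congr rfl fun z hz => ?_
        calc ∑ x ∈ range (i + 1), (if x = 0 ∧ 1 ≤ z ∧ z ≤ i - 1 then G x z else 0)
            = ∑ x ∈ range (i + 1),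
                (if x = 0 then (if 1 ≤ z ∧ z ≤ i - 1 then G x z else 0) else 0) := by
              refine Finset.sum_congr rfl fun x _ => ?_
              by_cases h1 : x = 0 <;> by_cases h2 : 1 ≤ z ∧ z ≤ i - 1 <;>
                simp [h1, h2]
          _ = if 1 ≤ z ∧ z ≤ i - 1 then G 0 z else 0 := by
              rw [Finset.sum_ite_eq' (range (i + 1)) 0
                (fun x => if 1 ≤ z ∧ z ≤ i - 1 then G x z else 0)]
              rw [if_pos (by simp)]
    _ = ∑ j ∈ Icc 1 (i - 1), G 0 j := by
        rw [← Finset.sum_subset (s₁ := Icc 1 (i-1))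
          (fun z hz => by simp only [mem_Icc, mem_range] at *; omega)
          (fun z hz hz' => by simp only [mem_Icc] at hz'; rw [if_neg]; omega)]
        exact Finset.sum_congr rfl fun z hz => by
          simp only [mem_Icc] at hz; rw [if_pos (by omega)]

private lemma myEdgeZ0 (i : ℕ) (G : ℕ → ℕ → M) :
    ∑ z ∈ range (i + 1), ∑ x ∈ range (i + 1),
        (if z = 0 ∧ 1 ≤ x ∧ x ≤ i - 1 then G x z else 0)
    = ∑ j ∈ Icc 1 (i - 1), G j 0 := by
  rw [Finset.sum_comm]
  exact myEdgeX0 i (fun z x => G x z)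

private lemma myDiag (i : ℕ) (G : ℕ → ℕ → M) :
    ∑ z ∈ range (i + 1), ∑ x ∈ range (i + 1),
        (if x + z = i ∧ 1 ≤ z ∧ z ≤ i - 1 then G x z else 0)
    = ∑ j ∈ Icc 1 (i - 1), G (i - j) j := by
  calc ∑ z ∈ range (i + 1), ∑ x ∈ range (i + 1),
        (if x + z = i ∧ 1 ≤ z ∧ z ≤ i - 1 then G x z else 0)
      = ∑ z ∈ range (i + 1), (if 1 ≤ z ∧ z ≤ i - 1 then G (i - z) z else 0) := by
        refine Finset.sum_congr rfl fun z hz => ?_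
        simp only [mem_range] at hz
        by_cases h2 : 1 ≤ z ∧ z ≤ i - 1
        · rw [if_pos h2]
          calc ∑ x ∈ range (i + 1), (if x + z = i ∧ 1 ≤ z ∧ z ≤ i - 1 then G x z else 0)
              = ∑ x ∈ range (i + 1), (if x = i - z then G x z else 0) := by
                refine Finset.sum_congr rfl fun x hx => ?_
                simp only [mem_range] at hx
                by_cases h : x = i - z
                · rw [if_pos h, if_pos ⟨by omega, h2⟩]
                · rw [if_neg h, if_neg (by intro hc; exact h (by omega))]
            _ = G (i - z) z := by
                rw [Finset.sum_ite_eq' (range (i + 1)) (i - z) (fun x => G x z)]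
                rw [if_pos (by simp only [mem_range]; omega)]
        · rw [if_neg h2]
          exact Finset.sum_eq_zero fun x _ => by
            rw [if_neg (by intro hc; exact h2 hc.2)]
    _ = ∑ j ∈ Icc 1 (i - 1), G (i - j) j := by
        rw [← Finset.sum_subset (s₁ := Icc 1 (i-1))
          (fun z hz => by simp only [mem_Icc, mem_range] at *; omega)
          (fun z hz hz' => by simp only [mem_Icc] at hz'; rw [if_neg]; omega)]
        exact Finset.sum_congr rfl fun z hz => by
          simp only [mem_Icc] at hz; rw [if_pos (by omega)]

private lemma myL1 (i : ℕ) (g : ℕ → ℕ → ℕ → M) :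
    ((∑ j ∈ Icc 1 (i - 1), ∑ k ∈ range (i - j + 1), g k (i - j - k) j)
      - ∑ j ∈ Icc 1 (i - 1), ∑ k ∈ range (i - j + 1), g j k (i - j - k))
    = (∑ j ∈ Icc 1 (i - 1), g 0 (i - j) j)
      - ∑ j ∈ Icc 1 (i - 1), g (i - j) j 0 := by
  have c1 : (∑ j ∈ Icc 1 (i - 1), ∑ k ∈ range (i - j + 1), g k (i - j - k) j)
      = ∑ z ∈ Icc 1 (i - 1), ∑ x ∈ range (i - z + 1), g x (i - x - z) z := by
    refine Finset.sum_congr rfl fun j hj => Finset.sum_congr rfl fun k hk => ?_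
    have h : i - j - k = i - k - j := by omega
    rw [h]
  have c2 : (∑ j ∈ Icc 1 (i - 1), ∑ k ∈ range (i - j + 1), g j k (i - j - k))
      = ∑ x ∈ Icc 1 (i - 1), ∑ z ∈ range (i - x + 1), g x (i - x - z) z := by
    refine Finset.sum_congr rfl fun j hj => ?_
    rw [← Finset.sum_range_reflect (fun z => g j (i - j - z) z) (i - j + 1)]
    refine Finset.sum_congr rfl fun k hk => ?_
    simp only [mem_range] at hk
    have h1 : i - j + 1 - 1 - k = i - j - k := by omega
    have h2 : i - j - (i - j - k) = k := by omega
    rw [h1, h2]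
  have rB1 : (∑ j ∈ Icc 1 (i - 1), g 0 (i - j) j)
      = ∑ j ∈ Icc 1 (i - 1), (fun x z => g x (i - x - z) z) 0 j :=
    Finset.sum_congr rfl fun j hj => rfl
  have rB2 : (∑ j ∈ Icc 1 (i - 1), g (i - j) j 0)
      = ∑ j ∈ Icc 1 (i - 1), (fun x z => g x (i - x - z) z) j 0 := by
    rw [mySum_Icc_reflect i (fun j => g (i - j) j 0)]
    refine Finset.sum_congr rfl fun j hj => ?_
    simp only [mem_Icc] at hj
    simp only []
    have h1 : i - (i - j) = j := by omega
    have h2 : i - j - 0 = i - j := by omega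
    rw [h1, h2]
  rw [c1, c2, rB1, rB2, myGridA i (fun x z => g x (i - x - z) z),
    myGridB i (fun x z => g x (i - x - z) z),
    ← myEdgeX0 i (fun x z => g x (i - x - z) z),
    ← myEdgeZ0 i (fun x z => g x (i - x - z) z),
    ← Finset.sum_sub_distrib, ← Finset.sum_sub_distrib]
  refine Finset.sum_congr rfl fun z hz => ?_
  rw [← Finset.sum_sub_distrib, ← Finset.sum_sub_distrib]
  refine Finset.sum_congr rfl fun x hx => ?_
  simp only [mem_range] at hz hx
  split_ifs <;> first | rfl | (exfalso; omega) | abel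

private lemma myL2 (i : ℕ) (g : ℕ → ℕ → ℕ → M) :
    ((∑ j ∈ Icc 1 (i - 1), ∑ k ∈ range (i - j + 1), g k (i - j - k) j)
      - ∑ j ∈ Icc 1 (i - 1), ∑ k ∈ range (i - j + 1), g k j (i - j - k))
    = (∑ j ∈ Icc 1 (i - 1), g (i - j) 0 j)
      - ∑ j ∈ Icc 1 (i - 1), g (i - j) j 0 := by
  have c1 : (∑ j ∈ Icc 1 (i - 1), ∑ k ∈ range (i - j + 1), g k (i - j - k) j)
      = ∑ z ∈ Icc 1 (i - 1), ∑ x ∈ range (i - z + 1), g x (i - x - z) z := by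
    refine Finset.sum_congr rfl fun j hj => Finset.sum_congr rfl fun k hk => ?_
    have h : i - j - k = i - k - j := by omega
    rw [h]
  have c2 : (∑ j ∈ Icc 1 (i - 1), ∑ k ∈ range (i - j + 1), g k j (i - j - k))
      = ∑ s ∈ Icc 1 (i - 1), ∑ x ∈ range (s + 1),
          (fun x z => g x (i - x - z) z) x (s - x) := by
    rw [mySum_Icc_reflect i (fun j => ∑ k ∈ range (i - j + 1), g k j (i - j - k))]
    refine Finset.sum_congr rfl fun s hs => ?_
    simp only [mem_Icc] at hs
    simp only []
    have h : i - (i - s) = s := by omega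
    rw [h]
    refine Finset.sum_congr rfl fun k hk => ?_
    simp only [mem_range] at hk
    have h2 : i - k - (s - k) = i - s := by omega
    rw [h2]
  have rDiag : (∑ j ∈ Icc 1 (i - 1), g (i - j) 0 j)
      = ∑ j ∈ Icc 1 (i - 1), (fun x z => g x (i - x - z) z) (i - j) j := by
    refine Finset.sum_congr rfl fun j hj => ?_
    simp only [mem_Icc] at hj
    simp only []
    have h : i - (i - j) - j = 0 := by omega
    rw [h]
  have rB2 : (∑ j ∈ Icc 1 (i - 1), g (i - j) j 0)
      = ∑ j ∈ Icc 1 (i - 1), (fun x z => g x (i - x - z) z) j 0 := by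
    rw [mySum_Icc_reflect i (fun j => g (i - j) j 0)]
    refine Finset.sum_congr rfl fun j hj => ?_
    simp only [mem_Icc] at hj
    simp only []
    have h1 : i - (i - j) = j := by omega
    have h2 : i - j - 0 = i - j := by omega
    rw [h1, h2]
  rw [c1, c2, rDiag, rB2, myGridA i (fun x z => g x (i - x - z) z),
    myGridC i (fun x z => g x (i - x - z) z),
    ← myDiag i (fun x z => g x (i - x - z) z),
    ← myEdgeZ0 i (fun x z => g x (i - x - z) z),
    ← Finset.sum_sub_distrib, ← Finset.sum_sub_distrib]
  refine Finset.sum_congr rfl fun z hz => ?_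
  rw [← Finset.sum_sub_distrib, ← Finset.sum_sub_distrib]
  refine Finset.sum_congr rfl fun x hx => ?_
  simp only [mem_range] at hz hx
  split_ifs <;> first | rfl | (exfalso; omega) | abel

end ObstructionHelpers

/-- The obstruction `ω_i(a,b,c) := −∑_{j=1}^{i−1} [ m_{i−j}(a, m_j(b,c)) − m_{i−j}(m_j(a,b), c) ]`
to continuing a formal deformation of a product to order `i`. -/
noncomputable def obstruction {A : Type*} [AddCommGroup A] [Module ℂ A]
    (m : ℕ → A →ₗ[ℂ] A →ₗ[ℂ] A) (i : ℕ) (a b c : A) : A :=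
  -∑ j ∈ Finset.Icc 1 (i - 1), (m (i - j) a (m j b c) - m (i - j) (m j a b) c)

/-- If `m₀` is associative and the order-`n` associativity conditions hold for all
`1 ≤ n ≤ i−1`, then the order-`i` obstruction `ω_i` is a Hochschild 3-cocycle
with respect to `m₀`. -/
theorem obstruction_is_hochschild_three_cocycle {A : Type*} [AddCommGroup A] [Module ℂ A]
    (i : ℕ) (hi : 2 ≤ i) (m : ℕ → A →ₗ[ℂ] A →ₗ[ℂ] A)
    (h0 : ∀ a b c : A, m 0 (m 0 a b) c = m 0 a (m 0 b c))
    (hassoc : ∀ n : ℕ, 1 ≤ n → n ≤ i - 1 → ∀ a b c : A,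
      ∑ j ∈ Finset.range (n + 1),
        (m j (m (n - j) a b) c - m j a (m (n - j) b c)) = 0)
    (a b c e : A) :
    m 0 a (obstruction m i b c e) - obstruction m i (m 0 a b) c e
      + obstruction m i a (m 0 b c) e - obstruction m i a b (m 0 c e)
      + m 0 (obstruction m i a b c) e = 0 := by
  -- `hassoc`-derived vanishing double sums
  have w1 : (∑ j ∈ Icc 1 (i-1), ∑ k ∈ range (i-j+1), m k (m (i-j-k) (m j a b) c) e)
      - (∑ j ∈ Icc 1 (i-1), ∑ k ∈ range (i-j+1), m k (m j a b) (m (i-j-k) c e)) = 0 := by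
    rw [← Finset.sum_sub_distrib]
    refine Finset.sum_eq_zero fun j hj => ?_
    simp only [mem_Icc] at hj
    rw [← Finset.sum_sub_distrib]
    exact hassoc (i-j) (by omega) (by omega) (m j a b) c e
  have w2 : (∑ j ∈ Icc 1 (i-1), ∑ k ∈ range (i-j+1), m k (m (i-j-k) a (m j b c)) e)
      - (∑ j ∈ Icc 1 (i-1), ∑ k ∈ range (i-j+1), m k a (m (i-j-k) (m j b c) e)) = 0 := by
    rw [← Finset.sum_sub_distrib]
    refine Finset.sum_eq_zero fun j hj => ?_
    simp only [mem_Icc] at hj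
    rw [← Finset.sum_sub_distrib]
    exact hassoc (i-j) (by omega) (by omega) a (m j b c) e
  have w3 : (∑ j ∈ Icc 1 (i-1), ∑ k ∈ range (i-j+1), m k (m (i-j-k) a b) (m j c e))
      - (∑ j ∈ Icc 1 (i-1), ∑ k ∈ range (i-j+1), m k a (m (i-j-k) b (m j c e))) = 0 := by
    rw [← Finset.sum_sub_distrib]
    refine Finset.sum_eq_zero fun j hj => ?_
    simp only [mem_Icc] at hj
    rw [← Finset.sum_sub_distrib]
    exact hassoc (i-j) (by omega) (by omega) a b (m j c e)
  have w4 : (∑ j ∈ Icc 1 (i-1), ∑ k ∈ range (i-j+1), m j (m k (m (i-j-k) a b) c) e)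
      - (∑ j ∈ Icc 1 (i-1), ∑ k ∈ range (i-j+1), m j (m k a (m (i-j-k) b c)) e) = 0 := by
    rw [← Finset.sum_sub_distrib]
    refine Finset.sum_eq_zero fun j hj => ?_
    simp only [mem_Icc] at hj
    rw [← Finset.sum_sub_distrib]
    have h := hassoc (i-j) (by omega) (by omega) a b c
    have h2 : m j (∑ k ∈ range (i-j+1),
        (m k (m (i-j-k) a b) c - m k a (m (i-j-k) b c))) e = 0 := by
      rw [h]; simp
    simpa only [map_sum, map_sub, LinearMap.sum_apply, LinearMap.sub_apply] using h2
  have w5 : (∑ j ∈ Icc 1 (i-1), ∑ k ∈ range (i-j+1), m j a (m k (m (i-j-k) b c) e))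
      - (∑ j ∈ Icc 1 (i-1), ∑ k ∈ range (i-j+1), m j a (m k b (m (i-j-k) c e))) = 0 := by
    rw [← Finset.sum_sub_distrib]
    refine Finset.sum_eq_zero fun j hj => ?_
    simp only [mem_Icc] at hj
    rw [← Finset.sum_sub_distrib]
    have h := hassoc (i-j) (by omega) (by omega) b c e
    have h2 : m j a (∑ k ∈ range (i-j+1),
        (m k (m (i-j-k) b c) e - m k b (m (i-j-k) c e))) = 0 := by
      rw [h]; simp
    simpa only [map_sum, map_sub] using h2
  -- reindexing identities
  have l1 : ((∑ j ∈ Icc 1 (i-1), ∑ k ∈ range (i-j+1), m k (m (i-j-k) (m j a b) c) e)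
      - ∑ j ∈ Icc 1 (i-1), ∑ k ∈ range (i-j+1), m j (m k (m (i-j-k) a b) c) e)
      = (∑ j ∈ Icc 1 (i-1), m 0 (m (i-j) (m j a b) c) e)
        - ∑ j ∈ Icc 1 (i-1), m (i-j) (m j (m 0 a b) c) e :=
    myL1 i (fun x y z => m x (m y (m z a b) c) e)
  have l2 : ((∑ j ∈ Icc 1 (i-1), ∑ k ∈ range (i-j+1), m k (m (i-j-k) a (m j b c)) e)
      - ∑ j ∈ Icc 1 (i-1), ∑ k ∈ range (i-j+1), m j (m k a (m (i-j-k) b c)) e)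
      = (∑ j ∈ Icc 1 (i-1), m 0 (m (i-j) a (m j b c)) e)
        - ∑ j ∈ Icc 1 (i-1), m (i-j) (m j a (m 0 b c)) e :=
    myL1 i (fun x y z => m x (m y a (m z b c)) e)
  have l3 : ((∑ j ∈ Icc 1 (i-1), ∑ k ∈ range (i-j+1), m k (m (i-j-k) a b) (m j c e))
      - ∑ j ∈ Icc 1 (i-1), ∑ k ∈ range (i-j+1), m k (m j a b) (m (i-j-k) c e))
      = (∑ j ∈ Icc 1 (i-1), m (i-j) (m 0 a b) (m j c e))
        - ∑ j ∈ Icc 1 (i-1), m (i-j) (m j a b) (m 0 c e) :=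
    myL2 i (fun x y z => m x (m y a b) (m z c e))
  have l4 : ((∑ j ∈ Icc 1 (i-1), ∑ k ∈ range (i-j+1), m k a (m (i-j-k) (m j b c) e))
      - ∑ j ∈ Icc 1 (i-1), ∑ k ∈ range (i-j+1), m j a (m k (m (i-j-k) b c) e))
      = (∑ j ∈ Icc 1 (i-1), m 0 a (m (i-j) (m j b c) e))
        - ∑ j ∈ Icc 1 (i-1), m (i-j) a (m j (m 0 b c) e) :=
    myL1 i (fun x y z => m x a (m y (m z b c) e))
  have l5 : ((∑ j ∈ Icc 1 (i-1), ∑ k ∈ range (i-j+1), m k a (m (i-j-k) b (m j c e)))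
      - ∑ j ∈ Icc 1 (i-1), ∑ k ∈ range (i-j+1), m j a (m k b (m (i-j-k) c e)))
      = (∑ j ∈ Icc 1 (i-1), m 0 a (m (i-j) b (m j c e)))
        - ∑ j ∈ Icc 1 (i-1), m (i-j) a (m j b (m 0 c e)) :=
    myL1 i (fun x y z => m x a (m y b (m z c e)))
  -- expand the five pieces of the coboundary
  have e1 : m 0 a (obstruction m i b c e)
      = (∑ j ∈ Icc 1 (i-1), m 0 a (m (i-j) (m j b c) e))
        - ∑ j ∈ Icc 1 (i-1), m 0 a (m (i-j) b (m j c e)) := by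
    simp only [obstruction, map_neg, map_sum, map_sub]
    rw [Finset.sum_sub_distrib, neg_sub]
  have e2 : obstruction m i (m 0 a b) c e
      = (∑ j ∈ Icc 1 (i-1), m (i-j) (m j (m 0 a b) c) e)
        - ∑ j ∈ Icc 1 (i-1), m (i-j) (m 0 a b) (m j c e) := by
    simp only [obstruction]
    rw [Finset.sum_sub_distrib, neg_sub]
  have e3 : obstruction m i a (m 0 b c) e
      = (∑ j ∈ Icc 1 (i-1), m (i-j) (m j a (m 0 b c)) e)
        - ∑ j ∈ Icc 1 (i-1), m (i-j) a (m j (m 0 b c) e) := by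
    simp only [obstruction]
    rw [Finset.sum_sub_distrib, neg_sub]
  have e4 : obstruction m i a b (m 0 c e)
      = (∑ j ∈ Icc 1 (i-1), m (i-j) (m j a b) (m 0 c e))
        - ∑ j ∈ Icc 1 (i-1), m (i-j) a (m j b (m 0 c e)) := by
    simp only [obstruction]
    rw [Finset.sum_sub_distrib, neg_sub]
  have e5 : m 0 (obstruction m i a b c) e
      = (∑ j ∈ Icc 1 (i-1), m 0 (m (i-j) (m j a b) c) e)
        - ∑ j ∈ Icc 1 (i-1), m 0 (m (i-j) a (m j b c)) e := by
    simp only [obstruction, map_neg, map_sum, map_sub, LinearMap.neg_apply,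
      LinearMap.sum_apply, LinearMap.sub_apply]
    rw [Finset.sum_sub_distrib, neg_sub]
  -- name all atoms
  set D1 := ∑ j ∈ Icc 1 (i-1), ∑ k ∈ range (i-j+1), m k (m (i-j-k) (m j a b) c) e with hD1
  set D1' := ∑ j ∈ Icc 1 (i-1), ∑ k ∈ range (i-j+1), m j (m k (m (i-j-k) a b) c) e with hD1'
  set D2 := ∑ j ∈ Icc 1 (i-1), ∑ k ∈ range (i-j+1), m k (m (i-j-k) a (m j b c)) e with hD2
  set D2' := ∑ j ∈ Icc 1 (i-1), ∑ k ∈ range (i-j+1), m j (m k a (m (i-j-k) b c)) e with hD2'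
  set D3 := ∑ j ∈ Icc 1 (i-1), ∑ k ∈ range (i-j+1), m k (m (i-j-k) a b) (m j c e) with hD3
  set D3' := ∑ j ∈ Icc 1 (i-1), ∑ k ∈ range (i-j+1), m k (m j a b) (m (i-j-k) c e) with hD3'
  set D4 := ∑ j ∈ Icc 1 (i-1), ∑ k ∈ range (i-j+1), m k a (m (i-j-k) (m j b c) e) with hD4
  set D4' := ∑ j ∈ Icc 1 (i-1), ∑ k ∈ range (i-j+1), m j a (m k (m (i-j-k) b c) e) with hD4'
  set D5 := ∑ j ∈ Icc 1 (i-1), ∑ k ∈ range (i-j+1), m k a (m (i-j-k) b (m j c e)) with hD5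
  set D5' := ∑ j ∈ Icc 1 (i-1), ∑ k ∈ range (i-j+1), m j a (m k b (m (i-j-k) c e)) with hD5'
  set B1 := ∑ j ∈ Icc 1 (i-1), m 0 (m (i-j) (m j a b) c) e with hB1
  set B1' := ∑ j ∈ Icc 1 (i-1), m (i-j) (m j (m 0 a b) c) e with hB1'
  set B2 := ∑ j ∈ Icc 1 (i-1), m 0 (m (i-j) a (m j b c)) e with hB2
  set B2' := ∑ j ∈ Icc 1 (i-1), m (i-j) (m j a (m 0 b c)) e with hB2'
  set B3 := ∑ j ∈ Icc 1 (i-1), m (i-j) (m 0 a b) (m j c e) with hB3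
  set B3' := ∑ j ∈ Icc 1 (i-1), m (i-j) (m j a b) (m 0 c e) with hB3'
  set B4 := ∑ j ∈ Icc 1 (i-1), m 0 a (m (i-j) (m j b c) e) with hB4
  set B4' := ∑ j ∈ Icc 1 (i-1), m (i-j) a (m j (m 0 b c) e) with hB4'
  set B5 := ∑ j ∈ Icc 1 (i-1), m 0 a (m (i-j) b (m j c e)) with hB5
  set B5' := ∑ j ∈ Icc 1 (i-1), m (i-j) a (m j b (m 0 c e)) with hB5'
  rw [e1, e2, e3, e4, e5]
  calc (B4 - B5) - (B1' - B3) + (B2' - B4') - (B3' - B5') + (B1 - B2)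
      = (D1 - D3') - (D2 - D4) + (D3 - D5) - (D1' - D2') - (D4' - D5')
        - (D1 - D1' - (B1 - B1')) + (D2 - D2' - (B2 - B2'))
        - (D3 - D3' - (B3 - B3')) - (D4 - D4' - (B4 - B4'))
        + (D5 - D5' - (B5 - B5')) := by abel
    _ = 0 := by
        have z1 : D1 - D1' - (B1 - B1') = 0 := by rw [l1]; abel
        have z2 : D2 - D2' - (B2 - B2') = 0 := by rw [l2]; abel
        have z3 : D3 - D3' - (B3 - B3') = 0 := by rw [l3]; abel
        have z4 : D4 - D4' - (B4 - B4') = 0 := by rw [l4]; abel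
        have z5 : D5 - D5' - (B5 - B5') = 0 := by rw [l5]; abel
        rw [w1, w2, w3, w4, w5, z1, z2, z3, z4, z5]
        abel
end

section
/- Let I be a type and let a, b : I →₀ ℕ be finitely supported functions; set g(a,b) := ∑_i |a(i) − b(i)| ∈ ℕ. If g(a,b) > n, or if g(a,b) + n is odd, then there is no pair (p, q) of finitely supported functions p, q : I →₀ ℕ satisfying (i) ∑_i (p(i) + q(i)) = n, (ii) a(i) + p(i) = b(i) + q(i) for every i ∈ I, and (iii) q(i) ≤ a(i) for every i ∈ I. -/
/-- If `g(a,b) := ∑_i |a(i) − b(i)| > n`, or `g(a,b) + n` is odd, then there is no pair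
`(p, q)` of finitely supported multiplicity functions with total card `n`,
`a + p = b + q` pointwise, and `q ≤ a` pointwise: `𝓘ᵇₐ(n) = ∅`. -/
theorem no_ladder_pair_of_dist_gt_or_odd {I : Type*} [DecidableEq I]
    (a b : I →₀ ℕ) (n : ℕ)
    (h : n < ∑ i ∈ a.support ∪ b.support, Nat.dist (a i) (b i)
        ∨ Odd ((∑ i ∈ a.support ∪ b.support, Nat.dist (a i) (b i)) + n)) :
    ¬ ∃ p q : I →₀ ℕ,
        ((p.sum fun _ k => k) + (q.sum fun _ k => k) = n) ∧
        (∀ i : I, a i + p i = b i + q i) ∧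
        (∀ i : I, q i ≤ a i) := by
  rintro ⟨p, q, hsum, heq, -⟩
  set S : Finset I := (a.support ∪ b.support) ∪ (p.support ∪ q.support) with hS
  have hg : ∑ i ∈ a.support ∪ b.support, Nat.dist (a i) (b i)
      = ∑ i ∈ S, Nat.dist (a i) (b i) := by
    refine Finset.sum_subset (Finset.subset_union_left) ?_
    intro i _ hi
    simp only [Finset.mem_union, Finsupp.mem_support_iff, not_or, not_not] at hi
    simp [hi.1, hi.2]
  have hn : n = ∑ i ∈ S, (p i + q i) := by
    rw [Finset.sum_add_distrib, ← hsum]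
    have hp : (p.sum fun _ k => k) = ∑ i ∈ S, p i :=
      Finsupp.sum_of_support_subset p
        (fun i hi => Finset.mem_union_right _ (Finset.mem_union_left _ hi)) _
        (fun i _ => rfl)
    have hq : (q.sum fun _ k => k) = ∑ i ∈ S, q i :=
      Finsupp.sum_of_support_subset q
        (fun i hi => Finset.mem_union_right _ (Finset.mem_union_right _ hi)) _
        (fun i _ => rfl)
    rw [hp, hq]
  have key : ∀ i, Nat.dist (a i) (b i) ≤ p i + q i ∧
      2 ∣ (Nat.dist (a i) (b i) + (p i + q i)) := by
    intro i
    have := heq i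
    have hd : Nat.dist (a i) (b i) = (a i - b i) + (b i - a i) := rfl
    omega
  have hle : ∑ i ∈ S, Nat.dist (a i) (b i) ≤ ∑ i ∈ S, (p i + q i) :=
    Finset.sum_le_sum fun i _ => (key i).1
  have heven : Even (∑ i ∈ S, Nat.dist (a i) (b i) + ∑ i ∈ S, (p i + q i)) := by
    rw [← Finset.sum_add_distrib]
    rw [even_iff_two_dvd]
    exact Finset.dvd_sum fun i _ => (key i).2
  rcases h with h | h
  · omega
  · rw [hg, hn] at h
    exact (Nat.not_even_iff_odd.2 h) heven
end

section
/- For every real μ > 0 and every x ∈ EuclideanSpace ℝ (Fin 3) with x ≠ 0, Δ( y ↦ log(μ‖y‖)/‖y‖ )(x) = −‖x‖^{−3}; that is, 1/r³ = −Δ( log(μr)/r ) holds pointwise for r = ‖x‖ ≠ 0. -/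
/-- The Laplacian of `f : EuclideanSpace ℝ (Fin D) → ℝ` at `x`: the sum over the
standard coordinate directions of the second directional derivatives of `f` at `x`. -/
lemma hasDerivAt_G (μ : ℝ) (hμ : 0 < μ) {v : ℝ} (hv : 0 < v) :
    HasDerivAt (fun t => Real.log (μ * Real.sqrt t) / Real.sqrt t)
      ((1 - Real.log (μ * v)) / (2 * v ^ 3)) (v ^ 2) := by
  have hs : (0:ℝ) < v ^ 2 := by positivity
  have hsv : Real.sqrt (v ^ 2) = v := Real.sqrt_sq hv.le
  have h1 : HasDerivAt Real.sqrt (1 / (2 * Real.sqrt (v ^ 2))) (v ^ 2) :=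
    Real.hasDerivAt_sqrt hs.ne'
  rw [hsv] at h1
  have h2 : HasDerivAt (fun t => μ * Real.sqrt t) (μ * (1 / (2 * v))) (v ^ 2) :=
    h1.const_mul μ
  have h3 : HasDerivAt (fun t => Real.log (μ * Real.sqrt t))
      ((μ * v)⁻¹ * (μ * (1 / (2 * v)))) (v ^ 2) := by
    have hlog : HasDerivAt Real.log (μ * v)⁻¹ (μ * Real.sqrt (v ^ 2)) := by
      rw [hsv]; exact Real.hasDerivAt_log (mul_pos hμ hv).ne'
    simpa [Function.comp_def, hsv] using hlog.comp (v ^ 2) h2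
  have h4 := h3.div h1 (by rw [hsv]; exact hv.ne' : Real.sqrt (v ^ 2) ≠ 0)
  simp only [hsv] at h4
  convert h4 using 1
  · rfl
  · rfl
  · rfl
  · field_simp

lemma hasDerivAt_G1 (μ : ℝ) (hμ : 0 < μ) {v : ℝ} (hv : 0 < v) :
    HasDerivAt (fun t => (1 - Real.log (μ * Real.sqrt t)) / (2 * Real.sqrt t ^ 3))
      ((3 * Real.log (μ * v) - 4) / (4 * v ^ 5)) (v ^ 2) := by
  have hs : (0:ℝ) < v ^ 2 := by positivity
  have hsv : Real.sqrt (v ^ 2) = v := Real.sqrt_sq hv.le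
  have h1 : HasDerivAt Real.sqrt (1 / (2 * Real.sqrt (v ^ 2))) (v ^ 2) :=
    Real.hasDerivAt_sqrt hs.ne'
  rw [hsv] at h1
  have h2 : HasDerivAt (fun t => μ * Real.sqrt t) (μ * (1 / (2 * v))) (v ^ 2) :=
    h1.const_mul μ
  have h3 : HasDerivAt (fun t => Real.log (μ * Real.sqrt t))
      ((μ * v)⁻¹ * (μ * (1 / (2 * v)))) (v ^ 2) := by
    have hlog : HasDerivAt Real.log (μ * v)⁻¹ (μ * Real.sqrt (v ^ 2)) := by
      rw [hsv]; exact Real.hasDerivAt_log (mul_pos hμ hv).ne'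
    simpa [Function.comp_def, hsv] using hlog.comp (v ^ 2) h2
  have hnum : HasDerivAt (fun t => 1 - Real.log (μ * Real.sqrt t))
      (-((μ * v)⁻¹ * (μ * (1 / (2 * v))))) (v ^ 2) := h3.const_sub 1
  have hden : HasDerivAt (fun t => 2 * Real.sqrt t ^ 3)
      (2 * (3 * v ^ 2 * (1 / (2 * v)))) (v ^ 2) := by
    have := (h1.pow 3).const_mul (2:ℝ)
    simp only [hsv] at this
    convert this using 1
    · rfl
    · rfl
    · ext t; simp
    · norm_num
  have h4 := hnum.div hden (by rw [hsv]; positivity)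
  simp only [hsv] at h4
  convert h4 using 1
  · rfl
  · rfl
  · rfl
  · field_simp
    ring

noncomputable def laplacian {D : ℕ} (f : EuclideanSpace ℝ (Fin D) → ℝ)
    (x : EuclideanSpace ℝ (Fin D)) : ℝ :=
  ∑ i : Fin D,
    fderiv ℝ (fun y => fderiv ℝ f y (EuclideanSpace.single i (1 : ℝ))) x
      (EuclideanSpace.single i (1 : ℝ))

/-- Differential renormalization identity in `D = 3`: for `μ > 0` and `x ≠ 0`,
`Δ( log(μ‖y‖)/‖y‖ )(x) = −‖x‖⁻³`, i.e. `1/r³ = −Δ(log(μ r)/r)` for `r = ‖x‖ ≠ 0`. -/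
theorem differential_renormalization (μ : ℝ) (hμ : 0 < μ)
    (x : EuclideanSpace ℝ (Fin 3)) (hx : x ≠ 0) :
    laplacian (fun y => Real.log (μ * ‖y‖) / ‖y‖) x = -(‖x‖ ^ 3)⁻¹ := by
  have hx0 : 0 < ‖x‖ := norm_pos_iff.mpr hx
  set f : EuclideanSpace ℝ (Fin 3) → ℝ := fun y => Real.log (μ * ‖y‖) / ‖y‖ with hfdef
  have hinner : ∀ (y : EuclideanSpace ℝ (Fin 3)) (i : Fin 3),
      (inner ℝ y (EuclideanSpace.single i (1 : ℝ)) : ℝ) = y i := by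
    intro y i
    rw [EuclideanSpace.inner_single_right]
    simp
  -- first derivative of f at any nonzero point
  have hd1 : ∀ y : EuclideanSpace ℝ (Fin 3), y ≠ 0 →
      HasFDerivAt f (((1 - Real.log (μ * ‖y‖)) / (2 * ‖y‖ ^ 3)) • (2 • innerSL ℝ y)) y := by
    intro y hy
    have hny : 0 < ‖y‖ := norm_pos_iff.mpr hy
    have hns : HasFDerivAt (fun z : EuclideanSpace ℝ (Fin 3) => ‖z‖ ^ 2) (2 • innerSL ℝ y) y :=
      (hasStrictFDerivAt_norm_sq y).hasFDerivAt
    have h := (hasDerivAt_G μ hμ hny).comp_hasFDerivAt y hns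
    have hfe : f = (fun t => Real.log (μ * Real.sqrt t) / Real.sqrt t) ∘
        (fun z : EuclideanSpace ℝ (Fin 3) => ‖z‖ ^ 2) := by
      funext z
      simp [hfdef, Function.comp, Real.sqrt_sq (norm_nonneg z)]
    rw [hfe]
    exact h
  -- first directional derivative formula
  have hfd : ∀ y : EuclideanSpace ℝ (Fin 3), y ≠ 0 → ∀ i : Fin 3,
      fderiv ℝ f y (EuclideanSpace.single i (1 : ℝ)) =
        2 * ((1 - Real.log (μ * Real.sqrt (‖y‖ ^ 2))) / (2 * Real.sqrt (‖y‖ ^ 2) ^ 3)) * y i := by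
    intro y hy i
    rw [(hd1 y hy).fderiv]
    rw [Real.sqrt_sq (norm_nonneg y)]
    simp only [ContinuousLinearMap.smul_apply, ContinuousLinearMap.coe_smul', Pi.smul_apply,
      innerSL_apply_apply, smul_eq_mul, hinner]
    ring
  -- second derivative pieces
  set L : ℝ := Real.log (μ * ‖x‖) with hL
  set c1 : ℝ := (1 - L) / (2 * ‖x‖ ^ 3) with hc1
  set c2 : ℝ := (3 * L - 4) / (4 * ‖x‖ ^ 5) with hc2
  have hc : HasFDerivAt
      (fun y : EuclideanSpace ℝ (Fin 3) =>
        (1 - Real.log (μ * Real.sqrt (‖y‖ ^ 2))) / (2 * Real.sqrt (‖y‖ ^ 2) ^ 3))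
      (c2 • (2 • innerSL ℝ x)) x := by
    have hns : HasFDerivAt (fun z : EuclideanSpace ℝ (Fin 3) => ‖z‖ ^ 2) (2 • innerSL ℝ x) x :=
      (hasStrictFDerivAt_norm_sq x).hasFDerivAt
    exact (hasDerivAt_G1 μ hμ hx0).comp_hasFDerivAt x hns
  have key : ∀ i : Fin 3,
      fderiv ℝ (fun y => fderiv ℝ f y (EuclideanSpace.single i (1 : ℝ))) x
        (EuclideanSpace.single i (1 : ℝ)) = 2 * c1 + 4 * c2 * (x i) ^ 2 := by
    intro i
    set Fi : EuclideanSpace ℝ (Fin 3) → ℝ := fun y =>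
      2 * ((1 - Real.log (μ * Real.sqrt (‖y‖ ^ 2))) / (2 * Real.sqrt (‖y‖ ^ 2) ^ 3)) * y i
      with hFi
    have hev : (fun y => fderiv ℝ f y (EuclideanSpace.single i (1 : ℝ))) =ᶠ[nhds x] Fi := by
      filter_upwards [IsOpen.mem_nhds isOpen_compl_singleton hx] with y hy
      exact hfd y hy i
    have hproj : HasFDerivAt (fun y : EuclideanSpace ℝ (Fin 3) => y i)
        (EuclideanSpace.proj i : EuclideanSpace ℝ (Fin 3) →L[ℝ] ℝ) x :=
      (EuclideanSpace.proj (𝕜 := ℝ) i).hasFDerivAt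
    have hFi' : HasFDerivAt Fi
        ((2 * ((1 - Real.log (μ * Real.sqrt (‖x‖ ^ 2))) / (2 * Real.sqrt (‖x‖ ^ 2) ^ 3))) •
            (EuclideanSpace.proj i : EuclideanSpace ℝ (Fin 3) →L[ℝ] ℝ) +
          (x i) • ((2:ℝ) • (c2 • (2 • innerSL ℝ x)))) x :=
      (hc.const_mul 2).mul hproj
    rw [hev.fderiv_eq, hFi'.fderiv]
    simp only [ContinuousLinearMap.add_apply, ContinuousLinearMap.smul_apply,
      innerSL_apply_apply, smul_eq_mul, hinner, Real.sqrt_sq (norm_nonneg x), ← hL, ← hc1]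
    have hproj1 : (EuclideanSpace.proj (𝕜 := ℝ) i) (EuclideanSpace.single i (1 : ℝ)) = 1 := by
      simp
    rw [hproj1]
    ring
  have hsum : ∑ i : Fin 3, (x i) ^ 2 = ‖x‖ ^ 2 := by
    rw [EuclideanSpace.norm_eq, Real.sq_sqrt (by positivity)]
    simp [sq_abs]
  rw [laplacian]
  simp only [key]
  rw [Finset.sum_add_distrib, Finset.sum_const, ← Finset.mul_sum, hsum]
  simp only [hc1, hc2]
  have hxne : ‖x‖ ≠ 0 := hx0.ne'
  simp only [Finset.card_univ, Fintype.card_fin]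
  field_simp
  have h3 : ‖x‖ ^ 3 * ‖x‖⁻¹ ^ 3 = 1 := by rw [← mul_pow, mul_inv_cancel₀ hxne, one_pow]
  linear_combination (3 - 3 * L) * h3
end

section
/- Let D, J ∈ ℕ, let P ∈ MvPolynomial (Fin D) ℝ be homogeneous of degree J and harmonic, and let H : EuclideanSpace ℝ (Fin D) → ℝ be its polynomial function. Then for every a ∈ ℝ and every x ≠ 0, Δ( y ↦ ‖y‖ᵃ · H(y) )(x) = a·(a + 2J + D − 2)·‖x‖^{a−2}·H(x). -/
open MvPolynomial

namespace LapAux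

theorem xmul_pderiv_monomial {D : ℕ} (s : Fin D →₀ ℕ) (c : ℝ) (i : Fin D) :
    X i * pderiv i (monomial s c) = monomial s (c * s i) := by
  rw [pderiv_monomial]
  rcases Nat.eq_zero_or_pos (s i) with h | h
  · simp [h]
  · have hs : Finsupp.single i 1 + (s - Finsupp.single i 1) = s := by
      ext j
      rcases eq_or_ne j i with rfl | hj
      · simp [Nat.sub_add_cancel h, Nat.add_sub_cancel' h]
      · simp [Finsupp.single_apply, hj, (Ne.symm hj : i ≠ j)]
    rw [X, monomial_mul, one_mul, hs]

theorem euler_aux {D J : ℕ} (P : MvPolynomial (Fin D) ℝ) (hhom : P.IsHomogeneous J) :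
    ∑ i : Fin D, X i * pderiv i P = (J : ℝ) • P := by
  conv_lhs => rw [P.as_sum]
  simp_rw [map_sum, Finset.mul_sum, xmul_pderiv_monomial]
  rw [Finset.sum_comm]
  conv_rhs => rw [P.as_sum, Finset.smul_sum]
  refine Finset.sum_congr rfl fun s hs => ?_
  have hJ : ∑ x : Fin D, (s x : ℝ) = (J : ℝ) := by
    have h1 := hhom (mem_support_iff.mp hs)
    have h2 : ∑ x ∈ s.support, s x = J := by
      simpa [Finsupp.weight_apply, Finsupp.sum] using h1
    rw [← h2, Finset.sum_subset (Finset.subset_univ s.support)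
      (fun x _ hx => by simpa using (Finsupp.notMem_support_iff.mp hx))]
    push_cast
    rfl
  rw [← map_sum, ← Finset.mul_sum, hJ, smul_monomial, smul_eq_mul, mul_comm]

theorem hasFDerivAt_mvpoly_eval {D : ℕ} (p : MvPolynomial (Fin D) ℝ)
    (y : EuclideanSpace ℝ (Fin D)) :
    HasFDerivAt (fun z : EuclideanSpace ℝ (Fin D) => eval (fun i => z i) p)
      (∑ i : Fin D, eval (fun i => y i) (pderiv i p) • (EuclideanSpace.proj i :
        EuclideanSpace ℝ (Fin D) →L[ℝ] ℝ)) y := by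
  induction p using MvPolynomial.induction_on with
  | C c => simpa using hasFDerivAt_const c y
  | add p q hp hq =>
    have := hp.add hq
    simp only [map_add, eval_add] at this ⊢
    refine this.congr_fderiv ?_
    symm
    rw [← Finset.sum_add_distrib]
    congr 1; ext i : 1; rw [add_smul]
  | mul_X p n hp =>
    have hX : HasFDerivAt (fun z : EuclideanSpace ℝ (Fin D) => z n)
        (EuclideanSpace.proj n : EuclideanSpace ℝ (Fin D) →L[ℝ] ℝ) y :=
      (EuclideanSpace.proj n : EuclideanSpace ℝ (Fin D) →L[ℝ] ℝ).hasFDerivAt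
    have h := hp.mul' hX
    simp only [eval_mul, eval_X] at h ⊢
    refine h.congr_fderiv ?_
    symm
    refine ContinuousLinearMap.ext fun v => ?_
    simp only [ContinuousLinearMap.sum_apply, ContinuousLinearMap.smul_apply,
      ContinuousLinearMap.add_apply, ContinuousLinearMap.smulRight_apply,
      PiLp.proj_apply, smul_eq_mul, pderiv_mul, pderiv_X, map_add, eval_add,
      eval_mul, eval_X, Pi.single_apply]
    rw [Finset.sum_congr rfl (fun i _ => by
      rw [add_mul] : ∀ i ∈ Finset.univ, _ = eval (fun j => y j) (pderiv i p) * y n * v i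
        + eval (fun j => y j) p * eval (fun j => y j) (if n = i then 1 else (0:MvPolynomial (Fin D) ℝ)) * v i)]
    rw [Finset.sum_add_distrib, add_comm]
    congr 1
    · rw [Finset.sum_eq_single n (fun i _ hi => by simp [Ne.symm hi]) (by simp)]
      simp
    · rw [op_smul_eq_smul, smul_eq_mul, Finset.mul_sum]; refine Finset.sum_congr rfl fun i _ => by ring

variable {D : ℕ}

noncomputable def Q (y : EuclideanSpace ℝ (Fin D)) : ℝ := ∑ i, (y i) ^ 2

noncomputable def QD (x : EuclideanSpace ℝ (Fin D)) : EuclideanSpace ℝ (Fin D) →L[ℝ] ℝ :=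
  ∑ i, (2 * x i) • (EuclideanSpace.proj i : EuclideanSpace ℝ (Fin D) →L[ℝ] ℝ)

lemma apply_single (c : Fin D → ℝ) (i : Fin D) :
    (∑ j, c j • (EuclideanSpace.proj j : EuclideanSpace ℝ (Fin D) →L[ℝ] ℝ))
      (EuclideanSpace.single i (1 : ℝ)) = c i := by
  simp only [ContinuousLinearMap.sum_apply, ContinuousLinearMap.smul_apply,
    PiLp.proj_apply, EuclideanSpace.single_apply, smul_eq_mul, mul_ite, mul_one, mul_zero]
  rw [Finset.sum_eq_single i (fun j _ hj => by simp [hj]) (by simp)]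
  simp

lemma QD_single (x : EuclideanSpace ℝ (Fin D)) (i : Fin D) :
    QD x (EuclideanSpace.single i (1 : ℝ)) = 2 * x i := apply_single _ i

lemma hasFDerivAt_Q (y : EuclideanSpace ℝ (Fin D)) : HasFDerivAt Q (QD y) y := by
  have h : ∀ i : Fin D, HasFDerivAt (fun z : EuclideanSpace ℝ (Fin D) => (z i) ^ 2)
      ((2 * y i) • (EuclideanSpace.proj i : EuclideanSpace ℝ (Fin D) →L[ℝ] ℝ)) y := by
    intro i
    have hp := (EuclideanSpace.proj i : EuclideanSpace ℝ (Fin D) →L[ℝ] ℝ).hasFDerivAt (x := y)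
    have : HasFDerivAt (fun z : EuclideanSpace ℝ (Fin D) => z i * z i) _ y := hp.mul hp
    simpa [pow_two, two_mul, add_smul] using this
  exact HasFDerivAt.fun_sum (fun i _ => h i)

lemma norm_eq_sqrt_Q (y : EuclideanSpace ℝ (Fin D)) : ‖y‖ = Real.sqrt (Q y) := by
  rw [EuclideanSpace.norm_eq, Q]
  congr 1
  exact Finset.sum_congr rfl fun i _ => by rw [Real.norm_eq_abs, sq_abs]

lemma Q_nonneg (y : EuclideanSpace ℝ (Fin D)) : 0 ≤ Q y :=
  Finset.sum_nonneg fun i _ => sq_nonneg _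

lemma Q_pos {x : EuclideanSpace ℝ (Fin D)} (hx : x ≠ 0) : 0 < Q x := by
  rcases (Q_nonneg x).lt_or_eq with h | h
  · exact h
  · exfalso
    apply hx
    have h0 : ∀ i ∈ Finset.univ, (x i) ^ 2 = 0 :=
      (Finset.sum_eq_zero_iff_of_nonneg fun i _ => sq_nonneg _).mp h.symm
    exact PiLp.ext fun i => by simpa using pow_eq_zero_iff (by norm_num : (2:ℕ) ≠ 0) |>.mp (h0 i (Finset.mem_univ i))

lemma norm_rpow_eq (y : EuclideanSpace ℝ (Fin D)) (b : ℝ) :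
    ‖y‖ ^ b = Q y ^ (b / 2) := by
  rw [norm_eq_sqrt_Q, Real.sqrt_eq_rpow, ← Real.rpow_mul (Q_nonneg y)]
  congr 1
  ring

lemma hasFDerivAt_Qrpow {x : EuclideanSpace ℝ (Fin D)} (hx : x ≠ 0) (b : ℝ) :
    HasFDerivAt (fun y => Q y ^ b) ((b * Q x ^ (b - 1)) • QD x) x :=
  (hasFDerivAt_Q x).rpow_const (Or.inl (Q_pos hx).ne')

end LapAux


/-- For `P` a harmonic homogeneous polynomial of degree `J` in `D` variables with
polynomial function `H`, and any `a : ℝ`,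
`Δ( ‖y‖ᵃ·H(y) )(x) = a·(a + 2J + D − 2)·‖x‖^{a−2}·H(x)` for all `x ≠ 0`. -/
theorem laplacian_rpow_mul_harmonic (D J : ℕ) (P : MvPolynomial (Fin D) ℝ)
    (hhom : P.IsHomogeneous J)
    (hharm : ∑ i : Fin D, MvPolynomial.pderiv i (MvPolynomial.pderiv i P) = 0)
    (a : ℝ) (x : EuclideanSpace ℝ (Fin D)) (hx : x ≠ 0) :
    laplacian (fun y => ‖y‖ ^ a * MvPolynomial.eval (fun i => y i) P) x
      = a * (a + 2 * (J : ℝ) + (D : ℝ) - 2) * ‖x‖ ^ (a - 2)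
          * MvPolynomial.eval (fun i => x i) P := by
  classical
  have hQpos := LapAux.Q_pos hx
  have hfun : (fun y : EuclideanSpace ℝ (Fin D) => ‖y‖ ^ a * eval (fun i => y i) P)
      = fun y => LapAux.Q y ^ (a/2) * eval (fun i => y i) P :=
    funext fun y => by rw [LapAux.norm_rpow_eq]
  rw [hfun, laplacian]
  -- first derivative at any nonzero point
  have hf : ∀ y : EuclideanSpace ℝ (Fin D), y ≠ 0 →
      HasFDerivAt (fun z => LapAux.Q z ^ (a/2) * eval (fun i => z i) P)
        ((LapAux.Q y ^ (a/2)) • (∑ i : Fin D, eval (fun i => y i) (pderiv i P) •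
            (EuclideanSpace.proj i : EuclideanSpace ℝ (Fin D) →L[ℝ] ℝ))
          + eval (fun i => y i) P • ((a/2 * LapAux.Q y ^ (a/2 - 1)) • LapAux.QD y)) y :=
    fun y hy => (LapAux.hasFDerivAt_Qrpow hy (a/2)).mul (LapAux.hasFDerivAt_mvpoly_eval P y)
  -- first directional derivative formula
  have hfd : ∀ (i : Fin D) (y : EuclideanSpace ℝ (Fin D)), y ≠ 0 →
      fderiv ℝ (fun z => LapAux.Q z ^ (a/2) * eval (fun i => z i) P) y
          (EuclideanSpace.single i (1:ℝ))
        = (a * LapAux.Q y ^ (a/2 - 1)) * y i * eval (fun j => y j) P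
          + LapAux.Q y ^ (a/2) * eval (fun j => y j) (pderiv i P) := by
    intro i y hy
    rw [(hf y hy).fderiv]
    simp only [ContinuousLinearMap.add_apply, ContinuousLinearMap.smul_apply, smul_eq_mul,
      LapAux.QD_single, LapAux.apply_single]
    ring
  -- second derivative: each term
  have hterm : ∀ i : Fin D,
      fderiv ℝ (fun y => fderiv ℝ (fun z => LapAux.Q z ^ (a/2) * eval (fun i => z i) P) y
          (EuclideanSpace.single i (1:ℝ))) x (EuclideanSpace.single i (1:ℝ))
        = a * (a - 2) * LapAux.Q x ^ (a/2 - 2) * (x i)^2 * eval (fun j => x j) P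
          + a * LapAux.Q x ^ (a/2 - 1) * eval (fun j => x j) P
          + 2 * a * LapAux.Q x ^ (a/2 - 1) * x i * eval (fun j => x j) (pderiv i P)
          + LapAux.Q x ^ (a/2) * eval (fun j => x j) (pderiv i (pderiv i P)) := by
    intro i
    have heq : (fun y => fderiv ℝ (fun z => LapAux.Q z ^ (a/2) * eval (fun i => z i) P) y
          (EuclideanSpace.single i (1:ℝ)))
        =ᶠ[nhds x] fun y => a * LapAux.Q y ^ (a/2 - 1) *
            (EuclideanSpace.proj i : EuclideanSpace ℝ (Fin D) →L[ℝ] ℝ) y * eval (fun j => y j) P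
          + LapAux.Q y ^ (a/2) * eval (fun j => y j) (pderiv i P) :=
      Filter.eventuallyEq_of_mem (isOpen_ne.mem_nhds hx) (fun y hy => hfd i y hy)
    rw [heq.fderiv_eq]
    have h1 := (LapAux.hasFDerivAt_Qrpow hx (a/2 - 1)).const_mul a
    have h2 := h1.mul ((EuclideanSpace.proj i :
      EuclideanSpace ℝ (Fin D) →L[ℝ] ℝ).hasFDerivAt (x := x))
    have h3 := h2.mul (LapAux.hasFDerivAt_mvpoly_eval P x)
    have h4 := (LapAux.hasFDerivAt_Qrpow hx (a/2)).mul
      (LapAux.hasFDerivAt_mvpoly_eval (pderiv i P) x)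
    rw [HasFDerivAt.fderiv (f := fun y => a * LapAux.Q y ^ (a/2 - 1) *
        (EuclideanSpace.proj i : EuclideanSpace ℝ (Fin D) →L[ℝ] ℝ) y * eval (fun j => y j) P
        + LapAux.Q y ^ (a/2) * eval (fun j => y j) (pderiv i P)) (h3.add h4)]
    simp only [ContinuousLinearMap.add_apply, ContinuousLinearMap.smul_apply, smul_eq_mul,
      LapAux.QD_single, LapAux.apply_single, PiLp.proj_apply, EuclideanSpace.single_apply,
      eq_self_iff_true, if_true, Pi.mul_apply]
    rw [show (a/2 - 1 - 1 : ℝ) = a/2 - 2 by ring, show (a/2 - 1 : ℝ) = a/2 - 1 by ring]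
    ring
  rw [Finset.sum_congr rfl (fun i _ => hterm i)]
  -- Euler and harmonicity
  have heuler : ∑ i : Fin D, x i * eval (fun j => x j) (pderiv i P)
      = (J : ℝ) * eval (fun j => x j) P := by
    have := congrArg (eval fun j => x j) (LapAux.euler_aux P hhom)
    simpa [map_sum, eval_mul, smul_eq_mul] using this
  have hh : ∑ i : Fin D, eval (fun j => x j) (pderiv i (pderiv i P)) = 0 := by
    have := congrArg (eval fun j => x j) hharm
    simpa [map_sum] using this
  have hQsum : ∑ i : Fin D, (x i)^2 = LapAux.Q x := rfl
  have hQQ : LapAux.Q x ^ (a/2 - 2) * LapAux.Q x = LapAux.Q x ^ (a/2 - 1) := by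
    rw [show (a/2 - 1 : ℝ) = (a/2 - 2) + 1 by ring, Real.rpow_add hQpos, Real.rpow_one]
  rw [show ‖x‖ ^ (a - 2) = LapAux.Q x ^ (a/2 - 1) by
    rw [LapAux.norm_rpow_eq, show ((a-2)/2 : ℝ) = a/2 - 1 by ring]]
  calc ∑ i : Fin D, (a * (a - 2) * LapAux.Q x ^ (a/2 - 2) * (x i)^2 * eval (fun j => x j) P
          + a * LapAux.Q x ^ (a/2 - 1) * eval (fun j => x j) P
          + 2 * a * LapAux.Q x ^ (a/2 - 1) * x i * eval (fun j => x j) (pderiv i P)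
          + LapAux.Q x ^ (a/2) * eval (fun j => x j) (pderiv i (pderiv i P)))
      = a * (a - 2) * LapAux.Q x ^ (a/2 - 2) * (∑ i : Fin D, (x i)^2) * eval (fun j => x j) P
          + (D : ℝ) * (a * LapAux.Q x ^ (a/2 - 1) * eval (fun j => x j) P)
          + 2 * a * LapAux.Q x ^ (a/2 - 1) *
              (∑ i : Fin D, x i * eval (fun j => x j) (pderiv i P))
          + LapAux.Q x ^ (a/2) *
              (∑ i : Fin D, eval (fun j => x j) (pderiv i (pderiv i P))) := by
        rw [Finset.sum_add_distrib, Finset.sum_add_distrib, Finset.sum_add_distrib]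
        congr 1
        · congr 1
          · congr 1
            · rw [Finset.mul_sum, Finset.sum_mul]
            · simp [Finset.card_univ, mul_comm]
          · rw [Finset.mul_sum]
            exact Finset.sum_congr rfl fun i _ => by ring
        · rw [Finset.mul_sum]
    _ = a * (a + 2 * (J : ℝ) + (D : ℝ) - 2) * LapAux.Q x ^ (a/2 - 1)
          * eval (fun j => x j) P := by
        rw [hQsum, heuler, hh, mul_zero, add_zero]
        rw [show a * (a-2) * LapAux.Q x ^ (a/2-2) * LapAux.Q x * eval (fun j => x j) P
            = a * (a-2) * (LapAux.Q x ^ (a/2-2) * LapAux.Q x) * eval (fun j => x j) P by ring,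
          hQQ]
        ring
end

section
/- Let D, J, p ∈ ℕ, let P ∈ MvPolynomial (Fin D) ℝ be homogeneous of degree J and harmonic, and let H : EuclideanSpace ℝ (Fin D) → ℝ be its polynomial function. Then for every a ∈ ℝ and every x ≠ 0, Δ( y ↦ ‖y‖ᵃ·(log‖y‖)ᵖ·H(y) )(x) = [ a(a + 2J + D − 2)·(log‖x‖)ᵖ + p(2a + 2J + D − 2)·(log‖x‖)^{p−1} + p(p−1)·(log‖x‖)^{p−2} ]·‖x‖^{a−2}·H(x), where for p = 0 the last two summands vanish and for p = 1 the last summand vanishes. -/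
open Real MvPolynomial


noncomputable def Gf (c : ℝ) (q : ℕ) (t : ℝ) : ℝ := t ^ c * (Real.log t / 2) ^ q
noncomputable def Gd (c : ℝ) (q : ℕ) (t : ℝ) : ℝ :=
  c * Gf (c - 1) q t + ((q : ℝ) / 2) * Gf (c - 1) (q - 1) t

lemma hasDerivAt_Gf (c : ℝ) (q : ℕ) {t : ℝ} (ht : 0 < t) :
    HasDerivAt (Gf c q) (Gd c q t) t := by
  have h1 : HasDerivAt (fun x : ℝ => x ^ c) (c * t ^ (c - 1)) t :=
    Real.hasDerivAt_rpow_const (Or.inl ht.ne')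
  have h2 : HasDerivAt (fun x : ℝ => (Real.log x / 2) ^ q)
      ((q : ℝ) * (Real.log t / 2) ^ (q - 1) * (t⁻¹ / 2)) t :=
    ((Real.hasDerivAt_log ht.ne').div_const 2).pow q
  have := h1.mul h2
  refine this.congr_deriv ?_
  have ht1 : t ^ (c - 1) = t ^ c / t := by
    rw [Real.rpow_sub ht, Real.rpow_one]
  unfold Gd Gf
  rw [ht1]
  field_simp

lemma hasDerivAt_Gd (c : ℝ) (q : ℕ) {t : ℝ} (ht : 0 < t) :
    HasDerivAt (Gd c q)
      (c * Gd (c - 1) q t + ((q : ℝ) / 2) * Gd (c - 1) (q - 1) t) t :=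
  ((hasDerivAt_Gf (c - 1) q ht).const_mul c).add
    ((hasDerivAt_Gf (c - 1) (q - 1) ht).const_mul ((q : ℝ) / 2))

lemma Gf_sq (c : ℝ) (q : ℕ) {r : ℝ} (hr : 0 < r) :
    Gf c q (r ^ 2) = r ^ (2 * c) * Real.log r ^ q := by
  unfold Gf
  rw [← Real.rpow_natCast r 2, ← Real.rpow_mul hr.le, Real.log_rpow hr]
  norm_num [mul_comm]

variable {D : ℕ}

lemma hasFDerivAt_eval (Q : MvPolynomial (Fin D) ℝ) (x : EuclideanSpace ℝ (Fin D)) :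
    HasFDerivAt (fun y : EuclideanSpace ℝ (Fin D) => MvPolynomial.eval (fun i => y i) Q)
      (∑ i : Fin D, MvPolynomial.eval (fun i => x i) (MvPolynomial.pderiv i Q) •
        (EuclideanSpace.proj i : EuclideanSpace ℝ (Fin D) →L[ℝ] ℝ)) x := by
  induction Q using MvPolynomial.induction_on with
  | C c =>
      simpa using (hasFDerivAt_const c x)
  | add P Q hP hQ =>
      have heq : (∑ i : Fin D, MvPolynomial.eval (fun i => x i) (pderiv i (P + Q)) •
          (EuclideanSpace.proj i : EuclideanSpace ℝ (Fin D) →L[ℝ] ℝ))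
          = (∑ i : Fin D, MvPolynomial.eval (fun i => x i) (pderiv i P) •
              (EuclideanSpace.proj i : EuclideanSpace ℝ (Fin D) →L[ℝ] ℝ))
            + ∑ i : Fin D, MvPolynomial.eval (fun i => x i) (pderiv i Q) •
              (EuclideanSpace.proj i : EuclideanSpace ℝ (Fin D) →L[ℝ] ℝ) := by
        simp [add_smul, Finset.sum_add_distrib]
      rw [heq]
      simp only [map_add]
      exact hP.add hQ
  | mul_X P j hP =>
      classical
      have hXj : HasFDerivAt (fun y : EuclideanSpace ℝ (Fin D) => y j)
          (EuclideanSpace.proj (𝕜 := ℝ) j) x := (EuclideanSpace.proj (𝕜 := ℝ) j).hasFDerivAt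
      have heq : (∑ i : Fin D, MvPolynomial.eval (fun i => x i) (pderiv i (P * X j)) •
          (EuclideanSpace.proj i : EuclideanSpace ℝ (Fin D) →L[ℝ] ℝ))
          = MvPolynomial.eval (fun i => x i) P • EuclideanSpace.proj (𝕜 := ℝ) j
            + x j • ∑ i : Fin D, MvPolynomial.eval (fun i => x i) (pderiv i P) •
              (EuclideanSpace.proj i : EuclideanSpace ℝ (Fin D) →L[ℝ] ℝ) := by
        have step : ∀ i : Fin D, MvPolynomial.eval (fun i => x i) (pderiv i (P * X j)) •
            (EuclideanSpace.proj i : EuclideanSpace ℝ (Fin D) →L[ℝ] ℝ)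
            = (if i = j then MvPolynomial.eval (fun i => x i) P •
                  (EuclideanSpace.proj (𝕜 := ℝ) i : EuclideanSpace ℝ (Fin D) →L[ℝ] ℝ) else 0)
              + x j • (MvPolynomial.eval (fun i => x i) (pderiv i P) •
                  (EuclideanSpace.proj i : EuclideanSpace ℝ (Fin D) →L[ℝ] ℝ)) := by
          intro i
          rw [pderiv_mul]
          by_cases h : i = j
          · subst h
            rw [pderiv_X_self]
            simp only [map_add, map_mul, eval_X, map_one, mul_one, if_pos rfl, add_smul,
              smul_smul]
            rw [add_comm]
            congr 1
            ring_nf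
          · rw [pderiv_X_of_ne (fun hji => h hji.symm)]
            simp only [map_add, map_mul, eval_X, map_zero, mul_zero, add_zero, if_neg h,
              zero_add, smul_smul]
            ring_nf
        rw [Finset.sum_congr rfl (fun i _ => step i), Finset.sum_add_distrib,
          Finset.sum_ite_eq' Finset.univ j, if_pos (Finset.mem_univ j), ← Finset.smul_sum]
      rw [heq]
      simp only [map_mul, eval_X]
      exact hP.mul hXj

lemma euler_monomial (m : Fin D →₀ ℕ) (c : ℝ) (x : Fin D → ℝ) :
    ∑ i : Fin D, x i * MvPolynomial.eval x (pderiv i (monomial m c))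
      = (∑ i : Fin D, (m i : ℝ)) * MvPolynomial.eval x (monomial m c) := by
  classical
  rw [Finset.sum_mul]
  apply Finset.sum_congr rfl
  intro i _
  rw [pderiv_monomial, eval_monomial, eval_monomial, Finsupp.prod_pow, Finsupp.prod_pow]
  set m' : Fin D →₀ ℕ := m - Finsupp.single i 1 with hm'
  rcases Nat.eq_zero_or_pos (m i) with h | h
  · simp [h]
  · have key : x i * ∏ j : Fin D, x j ^ m' j = ∏ j : Fin D, x j ^ m j := by
      rw [← Finset.mul_prod_erase Finset.univ _ (Finset.mem_univ i),
        ← Finset.mul_prod_erase Finset.univ (fun j => x j ^ m j) (Finset.mem_univ i), ← mul_assoc]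
      congr 1
      · rw [hm', Finsupp.tsub_apply, Finsupp.single_eq_same, ← pow_succ']
        congr 1
        omega
      · apply Finset.prod_congr rfl
        intro j hj
        rw [hm', Finsupp.tsub_apply, Finsupp.single_apply,
          if_neg (fun hij => (Finset.mem_erase.mp hj).1 hij.symm), Nat.sub_zero]
    calc x i * (c * ↑(m i) * ∏ j : Fin D, x j ^ m' j)
        = ↑(m i) * (c * (x i * ∏ j : Fin D, x j ^ m' j)) := by ring
      _ = ↑(m i) * (c * ∏ j : Fin D, x j ^ m j) := by rw [key]

lemma euler_eval {J : ℕ} {P : MvPolynomial (Fin D) ℝ} (hhom : P.IsHomogeneous J)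
    (x : Fin D → ℝ) :
    ∑ i : Fin D, x i * MvPolynomial.eval x (pderiv i P)
      = (J : ℝ) * MvPolynomial.eval x P := by
  classical
  conv_lhs => rw [as_sum P]
  conv_rhs => rw [as_sum P]
  simp only [map_sum, Finset.mul_sum]
  rw [Finset.sum_comm]
  apply Finset.sum_congr rfl
  intro m hm
  rw [euler_monomial]
  congr 1
  have hw : Finsupp.weight 1 m = J := hhom (MvPolynomial.mem_support_iff.mp hm)
  have hd : Finsupp.degree m = J := by rw [Finsupp.degree_eq_weight_one]; exact hw
  rw [← hd, Finsupp.degree_apply]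
  rw [Finset.sum_subset (Finset.subset_univ m.support)]
  · push_cast; rfl
  · intro j _ hj
    simp [Finsupp.notMem_support_iff.mp hj]

lemma hasFDerivAt_sumsq (x : EuclideanSpace ℝ (Fin D)) :
    HasFDerivAt (fun y : EuclideanSpace ℝ (Fin D) => ∑ j : Fin D, y j * y j)
      (∑ j : Fin D, (2 * x j) • (EuclideanSpace.proj j : EuclideanSpace ℝ (Fin D) →L[ℝ] ℝ)) x := by
  apply HasFDerivAt.fun_sum
  intro j _
  have hj : HasFDerivAt (fun y : EuclideanSpace ℝ (Fin D) => y j)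
      (EuclideanSpace.proj (𝕜 := ℝ) j) x := (EuclideanSpace.proj (𝕜 := ℝ) j).hasFDerivAt
  have := hj.mul hj
  refine this.congr_fderiv ?_
  rw [← add_smul]
  congr 1
  ring

lemma sum_proj_apply (w : Fin D → ℝ) (i : Fin D) :
    (∑ j : Fin D, w j • (EuclideanSpace.proj j : EuclideanSpace ℝ (Fin D) →L[ℝ] ℝ))
      (EuclideanSpace.single i (1 : ℝ)) = w i := by
  classical
  rw [ContinuousLinearMap.sum_apply]
  rw [Finset.sum_eq_single i]
  · simp
  · intro b _ hb
    simp only [ContinuousLinearMap.smul_apply, PiLp.proj_apply,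
      EuclideanSpace.single_apply, if_neg hb, smul_zero]
  · simp

/-- For `P` a harmonic homogeneous polynomial of degree `J` in `D` variables with
polynomial function `H`, any `a : ℝ` and `p : ℕ`,
`Δ( ‖y‖ᵃ·(log‖y‖)ᵖ·H(y) )(x) = [ a(a+2J+D−2)(log‖x‖)ᵖ + p(2a+2J+D−2)(log‖x‖)^{p−1}
  + p(p−1)(log‖x‖)^{p−2} ]·‖x‖^{a−2}·H(x)` for `x ≠ 0`; for `p = 0` the last two
summands vanish (their coefficients `p` and `p(p−1)` are zero) and for `p = 1` the
last summand vanishes. -/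
theorem laplacian_rpow_log_pow_mul_harmonic (D J p : ℕ) (P : MvPolynomial (Fin D) ℝ)
    (hhom : P.IsHomogeneous J)
    (hharm : ∑ i : Fin D, MvPolynomial.pderiv i (MvPolynomial.pderiv i P) = 0)
    (a : ℝ) (x : EuclideanSpace ℝ (Fin D)) (hx : x ≠ 0) :
    laplacian (fun y => ‖y‖ ^ a * Real.log ‖y‖ ^ p
        * MvPolynomial.eval (fun i => y i) P) x
      = (a * (a + 2 * (J : ℝ) + (D : ℝ) - 2) * Real.log ‖x‖ ^ p
          + (p : ℝ) * (2 * a + 2 * (J : ℝ) + (D : ℝ) - 2) * Real.log ‖x‖ ^ (p - 1)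
          + (p : ℝ) * ((p : ℝ) - 1) * Real.log ‖x‖ ^ (p - 2))
        * ‖x‖ ^ (a - 2) * MvPolynomial.eval (fun i => x i) P := by
  classical
  have hr : (0:ℝ) < ‖x‖ := norm_pos_iff.mpr hx
  set c : ℝ := a / 2 with hc
  have hs : ∀ y : EuclideanSpace ℝ (Fin D), (∑ j : Fin D, y j * y j) = ‖y‖ ^ 2 := by
    intro y
    rw [EuclideanSpace.norm_eq, Real.sq_sqrt (by positivity)]
    exact Finset.sum_congr rfl fun j _ => by
      rw [Real.norm_eq_abs, sq_abs]; exact (pow_two (y j)).symm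
  have hspos : ∀ y : EuclideanSpace ℝ (Fin D), y ≠ 0 → 0 < ∑ j : Fin D, y j * y j := by
    intro y hy
    rw [hs]
    exact pow_pos (norm_pos_iff.mpr hy) 2
  have hopen : IsOpen {y : EuclideanSpace ℝ (Fin D) | y ≠ 0} := isOpen_compl_singleton
  have heqF : ∀ y : EuclideanSpace ℝ (Fin D), y ≠ 0 →
      ‖y‖ ^ a * Real.log ‖y‖ ^ p * MvPolynomial.eval (fun i => y i) P
        = Gf c p (∑ j : Fin D, y j * y j) * MvPolynomial.eval (fun i => y i) P := by
    intro y hy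
    have h0 : (0:ℝ) < ‖y‖ := norm_pos_iff.mpr hy
    rw [hs, Gf_sq c p h0, show 2 * c = a from by rw [hc]; ring]
  have hF : ∀ y : EuclideanSpace ℝ (Fin D), y ≠ 0 →
      HasFDerivAt (fun z : EuclideanSpace ℝ (Fin D) =>
          Gf c p (∑ j : Fin D, z j * z j) * MvPolynomial.eval (fun i => z i) P)
        (Gf c p (∑ j : Fin D, y j * y j) •
            (∑ i : Fin D, MvPolynomial.eval (fun i' => y i') (pderiv i P) •
              (EuclideanSpace.proj i : EuclideanSpace ℝ (Fin D) →L[ℝ] ℝ))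
          + MvPolynomial.eval (fun i => y i) P •
            (Gd c p (∑ j : Fin D, y j * y j) •
              (∑ j : Fin D, (2 * y j) •
                (EuclideanSpace.proj j : EuclideanSpace ℝ (Fin D) →L[ℝ] ℝ)))) y := by
    intro y hy
    exact ((hasDerivAt_Gf c p (hspos y hy)).comp_hasFDerivAt y (hasFDerivAt_sumsq y)).mul
      (hasFDerivAt_eval P y)
  have hfirst : ∀ i : Fin D,
      (fun y => fderiv ℝ (fun z : EuclideanSpace ℝ (Fin D) =>
          ‖z‖ ^ a * Real.log ‖z‖ ^ p * MvPolynomial.eval (fun i' => z i') P) y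
          (EuclideanSpace.single i (1:ℝ)))
        =ᶠ[nhds x] (fun y => Gf c p (∑ j : Fin D, y j * y j) *
              MvPolynomial.eval (fun i' => y i') (pderiv i P)
            + MvPolynomial.eval (fun i' => y i') P *
              (Gd c p (∑ j : Fin D, y j * y j) * (2 * y i))) := by
    intro i
    filter_upwards [hopen.mem_nhds hx] with y hy
    have hloc : (fun z : EuclideanSpace ℝ (Fin D) =>
        ‖z‖ ^ a * Real.log ‖z‖ ^ p * MvPolynomial.eval (fun i' => z i') P)
        =ᶠ[nhds y] (fun z => Gf c p (∑ j : Fin D, z j * z j) *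
            MvPolynomial.eval (fun i' => z i') P) := by
      filter_upwards [hopen.mem_nhds hy] with z hz
      exact heqF z hz
    rw [hloc.fderiv_eq, (hF y hy).fderiv]
    rw [ContinuousLinearMap.add_apply, ContinuousLinearMap.smul_apply,
      ContinuousLinearMap.smul_apply, ContinuousLinearMap.smul_apply,
      sum_proj_apply, sum_proj_apply]
    simp only [smul_eq_mul]
  -- pieces for the second derivative at x
  have hA : HasFDerivAt (fun y : EuclideanSpace ℝ (Fin D) => Gf c p (∑ j : Fin D, y j * y j))
      (Gd c p (∑ j : Fin D, x j * x j) •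
        (∑ j : Fin D, (2 * x j) •
          (EuclideanSpace.proj j : EuclideanSpace ℝ (Fin D) →L[ℝ] ℝ))) x := by
    have := (hasDerivAt_Gf c p (hspos x hx)).comp_hasFDerivAt x (hasFDerivAt_sumsq x)
    exact this
  have hB : HasFDerivAt (fun y : EuclideanSpace ℝ (Fin D) => Gd c p (∑ j : Fin D, y j * y j))
      ((c * Gd (c - 1) p (∑ j : Fin D, x j * x j)
          + ((p : ℝ) / 2) * Gd (c - 1) (p - 1) (∑ j : Fin D, x j * x j)) •
        (∑ j : Fin D, (2 * x j) •
          (EuclideanSpace.proj j : EuclideanSpace ℝ (Fin D) →L[ℝ] ℝ))) x :=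
    by
    have := (hasDerivAt_Gd c p (hspos x hx)).comp_hasFDerivAt x (hasFDerivAt_sumsq x)
    exact this
  have hm : ∀ i : Fin D, HasFDerivAt (fun y : EuclideanSpace ℝ (Fin D) => 2 * y i)
      ((2:ℝ) • (EuclideanSpace.proj i : EuclideanSpace ℝ (Fin D) →L[ℝ] ℝ)) x :=
    fun i => ((EuclideanSpace.proj (𝕜 := ℝ) i).hasFDerivAt).const_mul 2
  have hval : ∀ i : Fin D,
      fderiv ℝ (fun y => fderiv ℝ (fun z : EuclideanSpace ℝ (Fin D) =>
          ‖z‖ ^ a * Real.log ‖z‖ ^ p * MvPolynomial.eval (fun i' => z i') P) y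
          (EuclideanSpace.single i (1:ℝ))) x (EuclideanSpace.single i (1:ℝ))
      = Gf c p (∑ j : Fin D, x j * x j) *
            MvPolynomial.eval (fun i' => x i') (pderiv i (pderiv i P))
        + 4 * Gd c p (∑ j : Fin D, x j * x j) *
            (x i * MvPolynomial.eval (fun i' => x i') (pderiv i P))
        + 2 * Gd c p (∑ j : Fin D, x j * x j) * MvPolynomial.eval (fun i' => x i') P
        + 4 * (c * Gd (c - 1) p (∑ j : Fin D, x j * x j)
            + ((p : ℝ) / 2) * Gd (c - 1) (p - 1) (∑ j : Fin D, x j * x j))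
            * MvPolynomial.eval (fun i' => x i') P * (x i * x i) := by
    intro i
    rw [(hfirst i).fderiv_eq]
    have hgi : HasFDerivAt (fun y : EuclideanSpace ℝ (Fin D) =>
        Gf c p (∑ j : Fin D, y j * y j) * MvPolynomial.eval (fun i' => y i') (pderiv i P)
          + MvPolynomial.eval (fun i' => y i') P *
            (Gd c p (∑ j : Fin D, y j * y j) * (2 * y i)))
        ((Gf c p (∑ j : Fin D, x j * x j) •
            (∑ j : Fin D, MvPolynomial.eval (fun i' => x i') (pderiv j (pderiv i P)) •
              (EuclideanSpace.proj j : EuclideanSpace ℝ (Fin D) →L[ℝ] ℝ))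
          + MvPolynomial.eval (fun i' => x i') (pderiv i P) •
            (Gd c p (∑ j : Fin D, x j * x j) •
              (∑ j : Fin D, (2 * x j) •
                (EuclideanSpace.proj j : EuclideanSpace ℝ (Fin D) →L[ℝ] ℝ))))
         + (MvPolynomial.eval (fun i' => x i') P •
              (Gd c p (∑ j : Fin D, x j * x j) •
                  ((2:ℝ) • (EuclideanSpace.proj i : EuclideanSpace ℝ (Fin D) →L[ℝ] ℝ))
                + (2 * x i) • ((c * Gd (c - 1) p (∑ j : Fin D, x j * x j)
                    + ((p : ℝ) / 2) * Gd (c - 1) (p - 1) (∑ j : Fin D, x j * x j)) •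
                  (∑ j : Fin D, (2 * x j) •
                    (EuclideanSpace.proj j : EuclideanSpace ℝ (Fin D) →L[ℝ] ℝ))))
            + (Gd c p (∑ j : Fin D, x j * x j) * (2 * x i)) •
              (∑ j : Fin D, MvPolynomial.eval (fun i' => x i') (pderiv j P) •
                (EuclideanSpace.proj j : EuclideanSpace ℝ (Fin D) →L[ℝ] ℝ)))) x := by
      exact (hA.mul (hasFDerivAt_eval (pderiv i P) x)).add
        ((hasFDerivAt_eval P x).mul (hB.mul (hm i)))
    rw [hgi.fderiv]
    simp only [ContinuousLinearMap.add_apply, ContinuousLinearMap.smul_apply,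
      sum_proj_apply, smul_eq_mul, PiLp.proj_apply, EuclideanSpace.single_apply,
      eq_self_iff_true, if_true]
    ring
  -- sum up
  have hlap : laplacian (fun y => ‖y‖ ^ a * Real.log ‖y‖ ^ p
      * MvPolynomial.eval (fun i => y i) P) x
      = ∑ i : Fin D, (Gf c p (∑ j : Fin D, x j * x j) *
            MvPolynomial.eval (fun i' => x i') (pderiv i (pderiv i P))
        + 4 * Gd c p (∑ j : Fin D, x j * x j) *
            (x i * MvPolynomial.eval (fun i' => x i') (pderiv i P))
        + 2 * Gd c p (∑ j : Fin D, x j * x j) * MvPolynomial.eval (fun i' => x i') P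
        + 4 * (c * Gd (c - 1) p (∑ j : Fin D, x j * x j)
            + ((p : ℝ) / 2) * Gd (c - 1) (p - 1) (∑ j : Fin D, x j * x j))
            * MvPolynomial.eval (fun i' => x i') P * (x i * x i)) := by
    unfold laplacian
    exact Finset.sum_congr rfl fun i _ => hval i
  rw [hlap]
  have hharm' : ∑ i : Fin D, MvPolynomial.eval (fun i' => x i') (pderiv i (pderiv i P)) = 0 := by
    calc ∑ i : Fin D, MvPolynomial.eval (fun i' => x i') (pderiv i (pderiv i P))
        = MvPolynomial.eval (fun i' => x i')
            (∑ i : Fin D, pderiv i (pderiv i P)) := (map_sum _ _ _).symm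
      _ = 0 := by rw [hharm, map_zero]
  have heu : ∑ i : Fin D, x i * MvPolynomial.eval (fun i' => x i') (pderiv i P)
      = (J : ℝ) * MvPolynomial.eval (fun i' => x i') P := by
    simpa using euler_eval hhom (fun i' => x i')
  have h1 : ∑ i : Fin D, Gf c p (∑ j : Fin D, x j * x j) *
      MvPolynomial.eval (fun i' => x i') (pderiv i (pderiv i P)) = 0 := by
    rw [← Finset.mul_sum, hharm', mul_zero]
  have h2 : ∑ i : Fin D, 4 * Gd c p (∑ j : Fin D, x j * x j) *
      (x i * MvPolynomial.eval (fun i' => x i') (pderiv i P))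
      = 4 * Gd c p (∑ j : Fin D, x j * x j) * ((J : ℝ) * MvPolynomial.eval (fun i' => x i') P) := by
    rw [← Finset.mul_sum, heu]
  have h3 : ∑ _i : Fin D, 2 * Gd c p (∑ j : Fin D, x j * x j) *
      MvPolynomial.eval (fun i' => x i') P
      = (D : ℝ) * (2 * Gd c p (∑ j : Fin D, x j * x j) * MvPolynomial.eval (fun i' => x i') P) := by
    rw [Finset.sum_const, Finset.card_univ, Fintype.card_fin, nsmul_eq_mul]
  have h4 : ∑ i : Fin D, 4 * (c * Gd (c - 1) p (∑ j : Fin D, x j * x j)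
        + ((p : ℝ) / 2) * Gd (c - 1) (p - 1) (∑ j : Fin D, x j * x j))
        * MvPolynomial.eval (fun i' => x i') P * (x i * x i)
      = 4 * (c * Gd (c - 1) p (∑ j : Fin D, x j * x j)
        + ((p : ℝ) / 2) * Gd (c - 1) (p - 1) (∑ j : Fin D, x j * x j))
        * MvPolynomial.eval (fun i' => x i') P * (∑ j : Fin D, x j * x j) := by
    rw [← Finset.mul_sum]
  rw [Finset.sum_add_distrib, Finset.sum_add_distrib, Finset.sum_add_distrib,
    h1, zero_add, h2, h3, h4]
  -- now pure algebra
  rw [hs x]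
  simp only [Gd]
  have e1 : ∀ q : ℕ, Gf (c - 1) q (‖x‖ ^ 2) = ‖x‖ ^ (a - 2) * Real.log ‖x‖ ^ q := by
    intro q
    rw [Gf_sq _ _ hr, show 2 * (c - 1) = a - 2 from by rw [hc]; ring]
  have e2 : ∀ q : ℕ, Gf (c - 1 - 1) q (‖x‖ ^ 2) = ‖x‖ ^ (a - 4) * Real.log ‖x‖ ^ q := by
    intro q
    rw [Gf_sq _ _ hr, show 2 * (c - 1 - 1) = a - 4 from by rw [hc]; ring]
  rw [e1 p, e1 (p-1), e2 p, e2 (p-1), show p - 1 - 1 = p - 2 from by omega, e2 (p-2)]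
  have hR4 : (‖x‖:ℝ) ^ (a - 4) = ‖x‖ ^ (a - 2) / ‖x‖ ^ 2 := by
    rw [show a - 4 = (a - 2) - 2 from by ring, Real.rpow_sub hr,
      show (2:ℝ) = ((2:ℕ):ℝ) from by norm_num, Real.rpow_natCast]
  rw [hR4]
  have h2 : (‖x‖:ℝ) ^ 2 ≠ 0 := by positivity
  rcases p with _ | q
  · simp only [Nat.cast_zero, pow_zero, Nat.zero_sub, Nat.cast_ofNat]
    field_simp
    ring
  · have hq1 : q + 1 - 1 = q := rfl
    have hq2 : q + 1 - 2 = q - 1 := by omega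
    rw [hq1, hq2]
    push_cast
    field_simp
    ring
end

section
/- Let D ≥ 3 and l ∈ ℕ. The real vector space of polynomials in D variables that are homogeneous of degree l and harmonic has dimension N(l,D) = (2l + D − 2)·(l + D − 3)! / ((D − 2)!·l!); equivalently, (D−2)!·l!·dim = (2l + D − 2)·(l + D − 3)!. -/
/-- The polynomial Laplace operator `∑_i ∂²/∂Xᵢ²` on `MvPolynomial (Fin D) ℝ`. -/
noncomputable def polyLaplacian (D : ℕ) :
    MvPolynomial (Fin D) ℝ →ₗ[ℝ] MvPolynomial (Fin D) ℝ :=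
  ∑ i : Fin D,
    ((MvPolynomial.pderiv i).toLinearMap.comp (MvPolynomial.pderiv i).toLinearMap)

/-- The space of harmonic polynomials that are homogeneous of degree `l`. -/
noncomputable def harmonicHomogeneous (D l : ℕ) : Submodule ℝ (MvPolynomial (Fin D) ℝ) :=
  MvPolynomial.homogeneousSubmodule (Fin D) ℝ l ⊓ LinearMap.ker (polyLaplacian D)

namespace SphHarmAux

open MvPolynomial

variable {D : ℕ}

/-- weight `a! = ∏ i (a i)!` -/
noncomputable def w (a : Fin D →₀ ℕ) : ℝ := ∏ i : Fin D, ((a i).factorial : ℝ)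

lemma w_pos (a : Fin D →₀ ℕ) : 0 < w a := by
  apply Finset.prod_pos
  intro i _
  exact_mod_cast (a i).factorial_pos

lemma w_add_single (b : Fin D →₀ ℕ) (i : Fin D) :
    w (Finsupp.single i 2 + b) = ((b i + 2) * (b i + 1) : ℕ) * w b := by
  have hi : ((Finsupp.single i 2 + b : Fin D →₀ ℕ)) i = b i + 2 := by
    simp [Finsupp.add_apply]
    omega
  have hrest : ∏ j ∈ Finset.univ.erase i, ((((Finsupp.single i 2 + b : Fin D →₀ ℕ)) j).factorial : ℝ)
      = ∏ j ∈ Finset.univ.erase i, ((b j).factorial : ℝ) := by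
    refine Finset.prod_congr rfl fun j hj => ?_
    have hji : j ≠ i := (Finset.mem_erase.mp hj).1
    rw [Finsupp.add_apply, Finsupp.single_apply, if_neg (fun h => hji h.symm), zero_add]
  rw [w, w, ← Finset.mul_prod_erase Finset.univ _ (Finset.mem_univ i),
      ← Finset.mul_prod_erase Finset.univ (fun j => ((b j).factorial : ℝ)) (Finset.mem_univ i),
      hrest, hi]
  have : (b i + 2).factorial = (b i + 2) * ((b i + 1) * (b i).factorial) := by
    rw [Nat.factorial_succ, Nat.factorial_succ]
  rw [this]
  push_cast
  ring

/-- Fischer-type pairing as a raw function. -/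
noncomputable def Bfun (P Q : MvPolynomial (Fin D) ℝ) : ℝ :=
  ∑ a ∈ P.support, w a * P.coeff a * Q.coeff a

lemma Bfun_eq_sum_subset {P Q : MvPolynomial (Fin D) ℝ} {s : Finset (Fin D →₀ ℕ)}
    (hs : P.support ⊆ s) :
    Bfun P Q = ∑ a ∈ s, w a * P.coeff a * Q.coeff a := by
  refine Finset.sum_subset hs fun a _ ha => ?_
  rw [MvPolynomial.notMem_support_iff.mp ha]
  ring

/-- The Fischer pairing as a bilinear map. -/
noncomputable def B : MvPolynomial (Fin D) ℝ →ₗ[ℝ] MvPolynomial (Fin D) ℝ →ₗ[ℝ] ℝ :=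
  LinearMap.mk₂ ℝ Bfun
    (fun P P' Q => by
      rw [Bfun_eq_sum_subset (s := P.support ∪ P'.support ∪ (P + P').support)
          (fun x hx => Finset.mem_union_right _ hx),
        Bfun_eq_sum_subset (P := P) (s := P.support ∪ P'.support ∪ (P + P').support)
          (by intro x hx; simp [Finset.mem_union, hx]),
        Bfun_eq_sum_subset (P := P') (s := P.support ∪ P'.support ∪ (P + P').support)
          (by intro x hx; simp [Finset.mem_union, hx]),
        ← Finset.sum_add_distrib]
      refine Finset.sum_congr rfl fun a _ => ?_
      rw [MvPolynomial.coeff_add]; ring)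
    (fun c P Q => by
      rw [Bfun_eq_sum_subset (s := P.support) (MvPolynomial.support_smul), smul_eq_mul,
        Bfun, Finset.mul_sum]
      refine Finset.sum_congr rfl fun a _ => ?_
      rw [MvPolynomial.coeff_smul]; simp; ring)
    (fun P Q Q' => by
      unfold Bfun
      rw [← Finset.sum_add_distrib]
      refine Finset.sum_congr rfl fun a _ => ?_
      rw [MvPolynomial.coeff_add]; ring)
    (fun c P Q => by
      unfold Bfun
      rw [smul_eq_mul, Finset.mul_sum]
      refine Finset.sum_congr rfl fun a _ => ?_
      rw [MvPolynomial.coeff_smul]; simp; ring)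

lemma B_monomial (u v : Fin D →₀ ℕ) (c d : ℝ) :
    B (monomial u c) (monomial v d) = if u = v then w u * c * d else 0 := by
  have h : B (monomial u c) (monomial v d)
      = ∑ a ∈ {u}, w a * (monomial u c).coeff a * (monomial v d).coeff a :=
    Bfun_eq_sum_subset (MvPolynomial.support_monomial_subset)
  rw [h, Finset.sum_singleton, MvPolynomial.coeff_monomial, MvPolynomial.coeff_monomial]
  by_cases huv : u = v
  · simp [huv]
  · simp [huv, Ne.symm huv]

/-- definiteness -/
lemma eq_zero_of_B_self_eq_zero {P : MvPolynomial (Fin D) ℝ} (h : B P P = 0) : P = 0 := by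
  by_contra hP
  have h0 : ∑ a ∈ P.support, w a * P.coeff a * P.coeff a = 0 := h
  have hnn : ∀ a ∈ P.support, 0 ≤ w a * P.coeff a * P.coeff a := by
    intro a _
    rw [mul_assoc]
    exact mul_nonneg (w_pos a).le (mul_self_nonneg _)
  obtain ⟨a, ha⟩ := (MvPolynomial.support_nonempty.mpr hP)
  have := (Finset.sum_eq_zero_iff_of_nonneg hnn).mp h0 a ha
  have hca : P.coeff a ≠ 0 := MvPolynomial.mem_support_iff.mp ha
  have hwa := w_pos a
  rw [mul_assoc] at this
  rcases mul_eq_zero.mp this with h' | h'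
  · exact absurd h' (ne_of_gt hwa)
  · exact hca (by nlinarith [mul_self_nonneg (P.coeff a)])

noncomputable def r2 : MvPolynomial (Fin D) ℝ := ∑ i : Fin D, X i ^ 2

lemma r2_isHomogeneous : (r2 (D := D)).IsHomogeneous 2 :=
  MvPolynomial.IsHomogeneous.sum _ _ _ fun i _ => isHomogeneous_X_pow i 2

lemma B_laplacian_monomial (a b : Fin D →₀ ℕ) (c d : ℝ) :
    B (polyLaplacian D (monomial a c)) (monomial b d)
      = B (monomial a c) (r2 * monomial b d) := by
  rw [polyLaplacian, LinearMap.sum_apply, map_sum, LinearMap.sum_apply,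
    r2, Finset.sum_mul, map_sum]
  refine Finset.sum_congr rfl fun i _ => ?_
  have hL : ((pderiv i).toLinearMap.comp (pderiv i).toLinearMap) (monomial a c)
      = monomial (a - Finsupp.single i 1 - Finsupp.single i 1)
          (c * (a i) * ((a - Finsupp.single i 1 : Fin D →₀ ℕ) i)) := by
    simp only [LinearMap.comp_apply, LinearMap.coe_mk, Derivation.coeFn_coe]
    rw [pderiv_monomial, pderiv_monomial]
  have hR : (X i ^ 2 : MvPolynomial (Fin D) ℝ) * monomial b d
      = monomial (Finsupp.single i 2 + b) d := by
    rw [X_pow_eq_monomial, monomial_mul, one_mul]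
  rw [hL, hR, B_monomial, B_monomial]
  have hii : ((a - Finsupp.single i 1 : Fin D →₀ ℕ)) i = a i - 1 := by
    rw [Finsupp.tsub_apply, Finsupp.single_apply, if_pos rfl]
  by_cases hab : a = Finsupp.single i 2 + b
  · have hai : a i = b i + 2 := by
      rw [hab, Finsupp.add_apply, Finsupp.single_apply, if_pos rfl]; omega
    have h1 : a - Finsupp.single i 1 - Finsupp.single i 1 = b := by
      ext j
      rw [Finsupp.tsub_apply, Finsupp.tsub_apply, hab]
      rw [Finsupp.add_apply, Finsupp.single_apply, Finsupp.single_apply]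
      by_cases hji : i = j <;> simp [hji]
    have h3 : b i + 2 - 1 = b i + 1 := rfl
    rw [if_pos h1, if_pos hab, hii, hai, h1, hab, w_add_single b i, h3]
    push_cast
    ring
  · rw [if_neg hab]
    by_cases h2 : a - Finsupp.single i 1 - Finsupp.single i 1 = b
    · rw [if_pos h2, hii]
      have hle : a i ≤ 1 := by
        by_contra hgt
        apply hab
        ext j
        have hj := DFunLike.congr_fun h2 j
        rw [Finsupp.tsub_apply, Finsupp.tsub_apply] at hj
        rw [Finsupp.add_apply]
        rcases eq_or_ne i j with h | h
        · subst h
          rw [Finsupp.single_apply, if_pos rfl] at hj ⊢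
          omega
        · rw [Finsupp.single_apply, if_neg h] at hj ⊢
          omega
      interval_cases h : a i <;> norm_num
    · rw [if_neg h2]

/-- Key adjointness: `B (Δ P) Q = B P (r² Q)`. -/
lemma B_laplacian (P Q : MvPolynomial (Fin D) ℝ) :
    B (polyLaplacian D P) Q = B P (r2 * Q) := by
  induction P using MvPolynomial.induction_on' with
  | add p q hp hq =>
    rw [map_add, map_add, LinearMap.add_apply, hp, hq, map_add, LinearMap.add_apply]
  | monomial a c =>
    induction Q using MvPolynomial.induction_on' with
    | add p q hp hq => rw [mul_add, map_add, map_add, hp, hq]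
    | monomial b d => exact B_laplacian_monomial a b c d

lemma degree_eq_sum_univ (d : Fin D →₀ ℕ) : d.degree = ∑ j : Fin D, d j :=
  Finset.sum_subset (Finset.subset_univ _)
    (fun x _ hx => Finsupp.notMem_support_iff.mp hx)

lemma pderiv_isHomogeneous {P : MvPolynomial (Fin D) ℝ} {n : ℕ}
    (h : P.IsHomogeneous n) (i : Fin D) : (pderiv i P).IsHomogeneous (n - 1) := by
  have hrepr : pderiv i P
      = ∑ v ∈ P.support, monomial (v - Finsupp.single i 1) (P.coeff v * v i) := by
    conv_lhs => rw [← P.support_sum_monomial_coeff]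
    rw [map_sum]
    exact Finset.sum_congr rfl fun v _ => pderiv_monomial
  rw [hrepr]
  refine MvPolynomial.IsHomogeneous.sum _ _ _ fun v hv => ?_
  by_cases h0 : v i = 0
  · rw [h0]
    norm_num
    exact isHomogeneous_zero _ _ _
  · apply isHomogeneous_monomial
    have hv1 : 1 ≤ v i := Nat.one_le_iff_ne_zero.mpr h0
    have hvdeg : v.degree = n := by
      rw [Finsupp.degree_eq_weight_one]
      exact h (MvPolynomial.mem_support_iff.mp hv)
    have hcomp : ∀ j ∈ Finset.univ.erase i, ((v - Finsupp.single i 1 : Fin D →₀ ℕ)) j = v j := by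
      intro j hj
      have hji : j ≠ i := (Finset.mem_erase.mp hj).1
      rw [Finsupp.tsub_apply, Finsupp.single_apply, if_neg (fun h => hji h.symm), Nat.sub_zero]
    have hii : ((v - Finsupp.single i 1 : Fin D →₀ ℕ)) i = v i - 1 := by
      rw [Finsupp.tsub_apply, Finsupp.single_apply, if_pos rfl]
    rw [degree_eq_sum_univ, ← Finset.add_sum_erase Finset.univ _ (Finset.mem_univ i),
      Finset.sum_congr rfl hcomp, hii]
    rw [degree_eq_sum_univ, ← Finset.add_sum_erase Finset.univ v (Finset.mem_univ i)] at hvdeg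
    have hlink : (Finset.univ.erase i).sum ⇑v = ∑ x ∈ Finset.univ.erase i, v x := rfl
    omega

lemma laplacian_mem_homogeneous {l : ℕ} {P : MvPolynomial (Fin D) ℝ}
    (h : P ∈ homogeneousSubmodule (Fin D) ℝ l) :
    polyLaplacian D P ∈ homogeneousSubmodule (Fin D) ℝ (l - 2) := by
  rw [mem_homogeneousSubmodule] at h ⊢
  rw [polyLaplacian, LinearMap.sum_apply]
  refine MvPolynomial.IsHomogeneous.sum _ _ _ fun i _ => ?_
  simpa [Nat.sub_sub] using pderiv_isHomogeneous (pderiv_isHomogeneous h i) i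

/-- The degree-`n` exponent set is in bijection with `Sym (Fin D) n`. -/
noncomputable def degreeSetEquivSym (n : ℕ) :
    {d : Fin D →₀ ℕ | d.degree = n} ≃ Sym (Fin D) n :=
  Equiv.subtypeEquiv (q := fun m => Multiset.card m = n)
    (Multiset.toFinsupp (α := Fin D)).toEquiv.symm (fun d => by
    have hcard : Multiset.card (Finsupp.toMultiset d) = d.degree := by
      rw [Finsupp.card_toMultiset]
      simp [Finsupp.degree, Finsupp.sum]; rfl
    show d.degree = n ↔ Multiset.card (Finsupp.toMultiset d) = n
    rw [hcard])

noncomputable instance degreeSetFintype (n : ℕ) :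
    Fintype {d : Fin D →₀ ℕ | d.degree = n} :=
  Fintype.ofEquiv _ (degreeSetEquivSym n).symm

lemma homog_eq_restrict (n : ℕ) :
    homogeneousSubmodule (Fin D) ℝ n
      = MvPolynomial.restrictSupport ℝ {d : Fin D →₀ ℕ | d.degree = n} :=
  homogeneousSubmodule_eq_finsupp_supported (σ := Fin D) (R := ℝ) n

/-- finrank of the homogeneous component. -/
lemma finrank_homogeneous (n : ℕ) :
    Module.finrank ℝ (homogeneousSubmodule (Fin D) ℝ n) = Nat.multichoose D n := by
  rw [homog_eq_restrict,
    Module.finrank_eq_card_basis (MvPolynomial.basisRestrictSupport ℝ _),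
    Fintype.card_congr (degreeSetEquivSym n), Sym.card_sym_eq_multichoose,
    Fintype.card_fin]

instance fd_homogeneous (n : ℕ) :
    FiniteDimensional ℝ (homogeneousSubmodule (Fin D) ℝ n) := by
  rw [homog_eq_restrict]
  exact Module.Finite.of_basis (MvPolynomial.basisRestrictSupport ℝ _)

lemma pderiv_eq_zero_of_isHomogeneous_zero {P : MvPolynomial (Fin D) ℝ}
    (h : P.IsHomogeneous 0) (i : Fin D) : pderiv i P = 0 := by
  conv_lhs => rw [← P.support_sum_monomial_coeff]
  rw [map_sum]
  refine Finset.sum_eq_zero fun v hv => ?_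
  have hdeg : v.degree = 0 := by
    rw [Finsupp.degree_eq_weight_one]
    exact h (MvPolynomial.mem_support_iff.mp hv)
  have hv0 : v i = 0 := by
    rw [Finsupp.degree_eq_zero_iff] at hdeg
    rw [hdeg]; rfl
  rw [pderiv_monomial, hv0]
  norm_num

lemma r2_ne_zero (hD : 1 ≤ D) : (r2 (D := D)) ≠ 0 := by
  intro h0
  have i0 : Fin D := ⟨0, by omega⟩
  have hc : coeff (Finsupp.single i0 2) (r2 (D := D)) = 1 := by
    rw [r2, MvPolynomial.coeff_sum]
    have hterm : ∀ i : Fin D, coeff (Finsupp.single i0 2) (X i ^ 2 : MvPolynomial (Fin D) ℝ)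
        = if i = i0 then 1 else 0 := fun i => by
      rw [X_pow_eq_monomial, MvPolynomial.coeff_monomial]
      rcases eq_or_ne i i0 with h | h
      · subst h; simp
      · rw [if_neg (fun hc => h (Finsupp.single_left_injective (by norm_num) hc)), if_neg h]
    rw [Finset.sum_congr rfl (fun i _ => hterm i)]
    simp
  rw [h0] at hc
  simp at hc

end SphHarmAux

set_option synthInstance.maxHeartbeats 1000000 in
set_option maxHeartbeats 1000000 in
open SphHarmAux MvPolynomial Module in
/-- For `D ≥ 3`, the dimension of the space of harmonic homogeneous polynomials of
degree `l` in `D` variables (= the space of spherical harmonics of order `l` in `D`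
dimensions) is `N(l,D) = (2l + D − 2)·(l + D − 3)! / ((D − 2)!·l!)`; equivalently,
`(D−2)!·l!·dim = (2l + D − 2)·(l + D − 3)!`. -/
theorem dim_harmonic_homogeneous (D l : ℕ) (hD : 3 ≤ D) :
    (D - 2).factorial * l.factorial
        * Module.finrank ℝ (harmonicHomogeneous D l)
      = (2 * l + D - 2) * (l + D - 3).factorial := by
  classical
  have low : ∀ l' ≤ 1, harmonicHomogeneous D l' = homogeneousSubmodule (Fin D) ℝ l' := by
    intro l' hl'
    rw [harmonicHomogeneous, inf_eq_left]
    intro P hP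
    rw [LinearMap.mem_ker, polyLaplacian, LinearMap.sum_apply]
    apply Finset.sum_eq_zero
    intro i _
    simp only [LinearMap.comp_apply, LinearMap.coe_mk, Derivation.coeFn_coe]
    apply pderiv_eq_zero_of_isHomogeneous_zero
    have := pderiv_isHomogeneous ((mem_homogeneousSubmodule _ _).mp hP) i
    rwa [show l' - 1 = 0 by omega] at this
  rcases l with _ | _ | m
  · rw [low 0 (by norm_num), finrank_homogeneous, Nat.multichoose_zero_right]
    rw [show 2*0 + D - 2 = (D - 3) + 1 by omega, show 0 + D - 3 = D - 3 by omega,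
      show D - 2 = (D - 3) + 1 by omega, Nat.factorial_succ]
    simp
  · rw [low 1 (by norm_num), finrank_homogeneous, Nat.multichoose_one_right]
    rw [show 2*1 + D - 2 = D by omega, show 1 + D - 3 = D - 2 by omega]
    simp [Nat.factorial_one]
    ring
  · -- main case: l = m + 2
    set Hl := homogeneousSubmodule (Fin D) ℝ (m + 1 + 1) with hHl
    set Hm := homogeneousSubmodule (Fin D) ℝ m with hHm
    have hmap : ∀ x ∈ Hl, polyLaplacian D x ∈ Hm := fun x hx => by
      have := SphHarmAux.laplacian_mem_homogeneous (l := m + 1 + 1) hx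
      rwa [show m + 1 + 1 - 2 = m by omega] at this
    set L := (polyLaplacian D).restrict hmap with hLdef
    have hker : LinearMap.ker L = Submodule.comap Hl.subtype (harmonicHomogeneous D (m+1+1)) := by
      rw [hLdef, LinearMap.ker_restrict, harmonicHomogeneous, Submodule.comap_inf,
        Submodule.comap_subtype_self, top_inf_eq]
    haveI : FiniteDimensional ℝ Hl := fd_homogeneous _
    haveI : FiniteDimensional ℝ Hm := fd_homogeneous _
    haveI fdK : FiniteDimensional ℝ (harmonicHomogeneous D (m+1+1)) :=
      Submodule.finiteDimensional_of_le (inf_le_left : harmonicHomogeneous D (m+1+1) ≤ Hl)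
    have e1 : finrank ℝ (LinearMap.ker L) = finrank ℝ (harmonicHomogeneous D (m+1+1)) := by
      rw [hker]
      exact (Submodule.comapSubtypeEquivOfLe
        (inf_le_left : harmonicHomogeneous D (m+1+1) ≤ Hl)).finrank_eq
    have hrn := LinearMap.finrank_range_add_finrank_ker L
    have hrange : finrank ℝ (LinearMap.range L) ≤ finrank ℝ Hm := Submodule.finrank_le _
    have r2ne : (r2 (D := D)) ≠ 0 := r2_ne_zero (by omega)
    have hinj :
        Function.Injective (LinearMap.mulLeft ℝ (r2 (D := D))) := by
      intro x y hxy
      simp only [LinearMap.mulLeft_apply] at hxy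
      exact mul_left_cancel₀ r2ne hxy
    set W := Submodule.map (LinearMap.mulLeft ℝ (r2 (D := D))) Hm with hWdef
    have hWle : W ≤ Hl := by
      rintro x ⟨Q, hQ, rfl⟩
      simp only [LinearMap.mulLeft_apply]
      have := (r2_isHomogeneous (D := D)).mul ((mem_homogeneousSubmodule _ _).mp hQ)
      rwa [show 2 + m = m + 1 + 1 by omega] at this
    haveI fdW : FiniteDimensional ℝ W := Submodule.finiteDimensional_of_le hWle
    have hdisj : harmonicHomogeneous D (m+1+1) ⊓ W = ⊥ := by
      rw [eq_bot_iff]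
      rintro x ⟨hxK, hxW⟩
      obtain ⟨Q, hQ, hxQ⟩ := hxW
      have hx0 : polyLaplacian D x = 0 := hxK.2
      have hBx : B x x = 0 := by
        have hx : (r2 (D := D)) * Q = x := by
          simpa [LinearMap.mulLeft_apply] using hxQ
        nth_rewrite 2 [← hx]
        rw [← B_laplacian, hx0, map_zero, LinearMap.zero_apply]
      have hx0' := eq_zero_of_B_self_eq_zero hBx
      simp [hx0']
    have hsup := Submodule.finrank_sup_add_finrank_inf_eq (harmonicHomogeneous D (m+1+1)) W
    rw [hdisj, finrank_bot, add_zero] at hsup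
    have hWrank : finrank ℝ W = finrank ℝ Hm :=
      ((Submodule.equivMapOfInjective _ hinj Hm).symm.finrank_eq)
    have hle2 : finrank ℝ ↥((harmonicHomogeneous D (m+1+1)) ⊔ W) ≤ finrank ℝ Hl :=
      Submodule.finrank_mono (sup_le (inf_le_left) hWle)
    have key : finrank ℝ (harmonicHomogeneous D (m+1+1)) + finrank ℝ Hm = finrank ℝ Hl := by
      omega
    rw [hHm, hHl, finrank_homogeneous, finrank_homogeneous,
      Nat.multichoose_eq, Nat.multichoose_eq] at key
    obtain ⟨d, rfl⟩ : ∃ d, D = d + 3 := ⟨D - 3, by omega⟩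
    set N := finrank ℝ (harmonicHomogeneous (d+3) (m+1+1)) with hNdef
    rw [show d + 3 + (m+1+1) - 1 = d + m + 4 by omega,
      show d + 3 + m - 1 = d + m + 2 by omega] at key
    have hA : (d+m+4).choose (m+2) * (m+2).factorial * (d+2).factorial
        = (d+m+4).factorial := by
      have := Nat.choose_mul_factorial_mul_factorial (show m+2 ≤ d+m+4 by omega)
      rwa [show d+m+4-(m+2) = d+2 by omega] at this
    have hB2 : (d+m+2).choose m * m.factorial * (d+2).factorial = (d+m+2).factorial := by
      have := Nat.choose_mul_factorial_mul_factorial (show m ≤ d+m+2 by omega)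
      rwa [show d+m+2-m = d+2 by omega] at this
    rw [show 2*(m+1+1) + (d+3) - 2 = 2*m+d+5 by omega,
      show (m+1+1) + (d+3) - 3 = d+m+2 by omega,
      show (d+3) - 2 = d + 1 by omega]
    apply Nat.eq_of_mul_eq_mul_left (show 0 < d + 2 by omega)
    have h1 : (N + (d+m+2).choose m) * ((m+1+1).factorial * (d+2).factorial)
        = (d+m+4).choose (m+1+1) * ((m+1+1).factorial * (d+2).factorial) := by rw [key]
    have e2 : (d+m+2).choose m * ((m+1+1).factorial * (d+2).factorial)
        = (m+2)*(m+1)*(d+m+2).factorial := by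
      calc (d+m+2).choose m * ((m+1+1).factorial * (d+2).factorial)
          = ((d+m+2).choose m * m.factorial * (d+2).factorial) * ((m+2)*(m+1)) := by
            rw [Nat.factorial_succ (m+1), Nat.factorial_succ m]; ring
        _ = (m+2)*(m+1)*(d+m+2).factorial := by rw [hB2]; ring
    have e3 : (d+m+4).choose (m+1+1) * ((m+1+1).factorial * (d+2).factorial)
        = (m+2)*(m+1)*(d+m+2).factorial + (d+2)*(2*m+d+5)*(d+m+2).factorial := by
      calc (d+m+4).choose (m+1+1) * ((m+1+1).factorial * (d+2).factorial)
          = (d+m+4).choose (m+2) * (m+2).factorial * (d+2).factorial := by ring_nf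
        _ = (d+m+4).factorial := hA
        _ = (d+m+4)*((d+m+3)*(d+m+2).factorial) := by
            rw [Nat.factorial_succ (d+m+3), Nat.factorial_succ (d+m+2)]
        _ = (m+2)*(m+1)*(d+m+2).factorial + (d+2)*(2*m+d+5)*(d+m+2).factorial := by ring
    rw [add_mul, e2, e3] at h1
    have h2 : N * ((m+1+1).factorial * (d+2).factorial)
        = (d+2)*(2*m+d+5)*(d+m+2).factorial := by omega
    calc (d+2) * ((d+1).factorial * (m+1+1).factorial * N)
        = N * ((m+1+1).factorial * (d+2).factorial) := by
          rw [Nat.factorial_succ (d+1)]; ring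
      _ = (d+2)*(2*m+d+5)*(d+m+2).factorial := h2
      _ = (d+2) * ((2*m+d+5) * (d+m+2).factorial) := by ring
end
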